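/- arXiv:2210.11706 — 5 statements merged into one kernel-verified Lean document; each statement's English description precedes it below -/
import Mathlib

section
/- Let X be a smooth manifold around x̄ ∈ X, S : ℝⁿ ⇉ ℝᵐ with gph S locally closed at (x̄,ū), ū ∈ S(x̄). Then for all (x,u) near (x̄,ū) in gph S|_X and all u* ∈ ℝᵐ: D*_X S(x|u)(u*) = proj_{T_X(x)} D*S|_X(x|u)(u*) = D*S|_X(x|u)(u*) ∩ T_X(x). -/
open Filter Topology Set Metric
open scoped ENNReal NNReal

noncomputable section

/-- Euclidean space ℝⁿ. -/
abbrev Euc (n : ℕ) := EuclideanSpace ℝ (Fin n)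

variable {E F : Type*}

/-- Set-valued metric (nearest-point) projection onto `C`. -/
def projSet [NormedAddCommGroup E] (C : Set E) (v : E) : Set E :=
  {y | y ∈ C ∧ ‖v - y‖ = Metric.infDist v C}

/-- Bouligand (contingent) tangent cone to `C` at `x`. -/
def tanCone [NormedAddCommGroup E] [NormedSpace ℝ E] (C : Set E) (x : E) : Set E :=
  {w | ∃ t : ℕ → ℝ, ∃ w' : ℕ → E, (∀ k, 0 < t k) ∧ Tendsto t atTop (𝓝 0) ∧
      Tendsto w' atTop (𝓝 w) ∧ ∀ k, x + t k • w' k ∈ C}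

section Normals
variable [NormedAddCommGroup E] [InnerProductSpace ℝ E]
  [NormedAddCommGroup F] [InnerProductSpace ℝ F]

/-- Fréchet (regular) normal cone to `C` at `x`. -/
def fNormal (C : Set E) (x : E) : Set E :=
  {v | x ∈ C ∧ ∀ ε > 0, ∃ δ > 0, ∀ y ∈ C, ‖y - x‖ < δ → (inner ℝ v (y - x) : ℝ) ≤ ε * ‖y - x‖}

/-- Limiting (Mordukhovich) normal cone to `C` at `x`. -/
def lNormal (C : Set E) (x : E) : Set E :=
  {v | x ∈ C ∧ ∃ xk vk : ℕ → E, (∀ k, vk k ∈ fNormal C (xk k)) ∧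
      Tendsto xk atTop (𝓝 x) ∧ Tendsto vk atTop (𝓝 v)}

/-- Fréchet normal cone to a subset of a product space (componentwise inner product). -/
def fNormal2 (D : Set (E × F)) (z : E × F) : Set (E × F) :=
  {v | z ∈ D ∧ ∀ ε > 0, ∃ δ > 0, ∀ z' ∈ D, ‖z' - z‖ < δ →
      (inner ℝ v.1 (z'.1 - z.1) : ℝ) + (inner ℝ v.2 (z'.2 - z.2) : ℝ) ≤ ε * ‖z' - z‖}

/-- Limiting normal cone to a subset of a product space. -/
def lNormal2 (D : Set (E × F)) (z : E × F) : Set (E × F) :=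
  {v | z ∈ D ∧ ∃ zk vk : ℕ → E × F, (∀ k, vk k ∈ fNormal2 D (zk k)) ∧
      Tendsto zk atTop (𝓝 z) ∧ Tendsto vk atTop (𝓝 v)}

/-- Graph of a set-valued mapping. -/
def gph (S : E → Set F) : Set (E × F) := {z | z.2 ∈ S z.1}

/-- Restriction of a set-valued mapping to a set `X`. -/
def restr (S : E → Set F) (X : Set E) : E → Set F := fun x => {u | u ∈ S x ∧ x ∈ X}

/-- Fréchet coderivative of `S` at `x` for `u`. -/
def fCoderiv (S : E → Set F) (x : E) (u : F) (u' : F) : Set E :=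
  {x' | (x', -u') ∈ fNormal2 (gph S) (x, u)}

/-- Limiting coderivative of `S` at `x` for `u`. -/
def coderiv (S : E → Set F) (x : E) (u : F) (u' : F) : Set E :=
  {x' | (x', -u') ∈ lNormal2 (gph S) (x, u)}

/-- Projection of the limiting normal cone of `gph (restr S X)` at `z`
onto `T_X(z.1) × F` (projection acting on the first component only). -/
def projNormal (S : E → Set F) (X : Set E) (z : E × F) : Set (E × F) :=
  {q | ∃ v : E, (v, q.2) ∈ lNormal2 (gph (restr S X)) z ∧ q.1 ∈ projSet (tanCone X z.1) v}

/-- Projectional coderivative of `S` relative to `X` at `x` for `u`: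
the outer limit of the projected normal cones along `gph (restr S X)`. -/
def projCoderiv (S : E → Set F) (X : Set E) (x : E) (u : F) (u' : F) : Set E :=
  {t | ∃ zk qk : ℕ → E × F,
      (∀ k, zk k ∈ gph (restr S X)) ∧ (∀ k, qk k ∈ projNormal S X (zk k)) ∧
      Tendsto zk atTop (𝓝 (x, u)) ∧ Tendsto qk atTop (𝓝 (t, -u'))}

/-- `C` is locally closed at `z`. -/
def LocallyClosedAt (C : Set E) (z : E) : Prop :=
  ∃ ε > 0, IsClosed (C ∩ Metric.closedBall z ε)

/-- `S` has the Lipschitz-like (Aubin) property relative to `X` at `xb` for `ub`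
with constant `κ`. -/
def LipschitzLikeRel (S : E → Set F) (X : Set E) (xb : E) (ub : F) (κ : ℝ) : Prop :=
  LocallyClosedAt (gph S) (xb, ub) ∧
  ∃ V ∈ 𝓝 xb, ∃ W ∈ 𝓝 ub, ∀ x ∈ X ∩ V, ∀ x' ∈ X ∩ V, ∀ u ∈ S x' ∩ W,
    ∃ u'' ∈ S x, ‖u - u''‖ ≤ κ * ‖x' - x‖

end Normals

/-- `X ⊆ ℝⁿ` is a smooth manifold around `x₀`, witnessed by the chart data
`(O, Φ, Φ')`: `O` open containing `x₀`, `X ∩ O = Φ⁻¹(0)`, `Φ` is `C¹` on `O`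
with derivative `Φ'`, and `Φ'(x₀)` is surjective (full rank). -/
def IsSmoothMfdChart {n c : ℕ} (X : Set (Euc n)) (x₀ : Euc n) (O : Set (Euc n))
    (Φ : Euc n → Euc c) (Φ' : Euc n → (Euc n →L[ℝ] Euc c)) : Prop :=
  IsOpen O ∧ x₀ ∈ O ∧ X ∩ O = {x | x ∈ O ∧ Φ x = 0} ∧
  (∀ x ∈ O, HasFDerivAt Φ (Φ' x) x) ∧ ContinuousOn Φ' O ∧
  Function.Surjective (Φ' x₀)

/-- `X ⊆ ℝⁿ` is a smooth manifold around `x₀`. -/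
def SmoothManifoldAround {n : ℕ} (X : Set (Euc n)) (x₀ : Euc n) : Prop :=
  ∃ (c : ℕ) (O : Set (Euc n)) (Φ : Euc n → Euc c) (Φ' : Euc n → (Euc n →L[ℝ] Euc c)),
    IsSmoothMfdChart X x₀ O Φ Φ'
section Aux

theorem projSet_self [NormedAddCommGroup E] {C : Set E} {t : E} (ht : t ∈ C) :
    t ∈ projSet C t := by
  refine ⟨ht, ?_⟩
  have h1 : Metric.infDist t C ≤ 0 := by
    simpa using Metric.infDist_le_dist_of_mem (x := t) ht
  have h2 : 0 ≤ Metric.infDist t C := Metric.infDist_nonneg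
  simp [le_antisymm h1 h2]

theorem proj_orth {E F' : Type*} [NormedAddCommGroup E] [InnerProductSpace ℝ E]
    [NormedAddCommGroup F'] [NormedSpace ℝ F'] {A : E →L[ℝ] F'} {v t : E}
    (h : t ∈ projSet {s | A s = 0} v) : ∀ s, A s = 0 → (inner ℝ (v - t) s : ℝ) = 0 := by
  obtain ⟨htC, hdist⟩ := h
  intro s hs
  set c : ℝ := (inner ℝ (v - t) s : ℝ) with hc
  have key : ∀ r : ℝ, 0 ≤ -2*(r*c) + r^2 * ‖s‖^2 := by
    intro r
    have hmem : t + r • s ∈ {s : E | A s = 0} := by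
      have htC' : A t = 0 := htC
      simp [Set.mem_setOf_eq, map_add, map_smul, htC', hs]
    have h1 : Metric.infDist v {s : E | A s = 0} ≤ ‖v - (t + r • s)‖ := by
      simpa [dist_eq_norm] using Metric.infDist_le_dist_of_mem hmem
    rw [← hdist] at h1
    have h2 : ‖v - t‖^2 ≤ ‖v - (t + r • s)‖^2 := by
      exact pow_le_pow_left₀ (norm_nonneg _) h1 2
    have h3 : v - (t + r • s) = (v - t) - r • s := by
      rw [sub_add_eq_sub_sub]
    have hx := @norm_sub_sq_real _ _ _ (v - t) (r • s)
    rw [real_inner_smul_right, norm_smul, mul_pow, Real.norm_eq_abs, sq_abs, ← hc] at hx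
    rw [h3, hx] at h2
    linarith
  have hq : (0:ℝ) < ‖s‖^2 + 1 := by positivity
  have hr := key (c / (‖s‖^2 + 1))
  set p := ‖s‖^2 with hp
  have hp0 : 0 ≤ p := by positivity
  have hqne : p + 1 ≠ 0 := ne_of_gt hq
  rw [div_pow] at hr
  have h6 : 0 ≤ (-2 * (c / (p+1) * c) + c^2 / (p+1)^2 * p) * (p+1)^2 :=
    mul_nonneg hr (sq_nonneg _)
  have h7 : (-2 * (c / (p+1) * c) + c^2 / (p+1)^2 * p) * (p+1)^2
      = -2*c^2*(p+1) + c^2 * p := by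
    field_simp
  rw [h7] at h6
  have hc2 : c^2 ≤ 0 := by nlinarith [mul_nonneg (sq_nonneg c) hp0]
  have : c^2 = 0 := le_antisymm hc2 (sq_nonneg c)
  exact pow_eq_zero_iff (two_ne_zero) |>.mp this

theorem mem_range_adjoint {n c : ℕ} (A : Euc n →L[ℝ] Euc c) {v : Euc n}
    (hv : ∀ s, A s = 0 → (inner ℝ v s : ℝ) = 0) :
    ∃ y, v = ContinuousLinearMap.adjoint A y := by
  set R : Submodule ℝ (Euc n) := LinearMap.range (ContinuousLinearMap.adjoint A : Euc c →ₗ[ℝ] Euc n) with hR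
  obtain ⟨v₁, hv₁, v₂, hv₂, hsum⟩ := R.exists_add_mem_mem_orthogonal v
  have hv₂' := (Submodule.mem_orthogonal _ _).1 hv₂
  have hAv₂ : A v₂ = 0 := by
    have hmem : ContinuousLinearMap.adjoint A (A v₂) ∈ R := LinearMap.mem_range.2 ⟨A v₂, rfl⟩
    have h := hv₂' _ hmem
    rw [ContinuousLinearMap.adjoint_inner_left] at h
    exact inner_self_eq_zero.mp h
  have hvv₂ : (inner ℝ v v₂ : ℝ) = 0 := hv v₂ hAv₂
  have hv₁v₂ : (inner ℝ v₁ v₂ : ℝ) = 0 := hv₂' v₁ hv₁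
  have hzero : v₂ = 0 := by
    have h22 : (inner ℝ v₂ v₂ : ℝ) = 0 := by
      rw [hsum, inner_add_left] at hvv₂
      linarith
    exact inner_self_eq_zero.mp h22
  obtain ⟨y, hy⟩ := LinearMap.mem_range.1 hv₁
  exact ⟨y, by rw [hsum, hzero, add_zero, ← hy]; rfl⟩

end Aux
section Chart

variable {n m c : ℕ} {X : Set (Euc n)} {xb : Euc n} {O : Set (Euc n)}
  {Φ : Euc n → Euc c} {Φ' : Euc n → (Euc n →L[ℝ] Euc c)}

theorem chart_ball (hch : IsSmoothMfdChart X xb O Φ Φ') :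
    ∃ r > 0, Metric.ball xb r ⊆ O ∧ ∀ x ∈ Metric.ball xb r, Function.Surjective (Φ' x) := by
  obtain ⟨hO, hxbO, hXO, hderiv, hcont, hsurj⟩ := hch
  set G : Euc n → (Euc c →L[ℝ] Euc c) :=
    fun x => (Φ' x).comp (ContinuousLinearMap.adjoint (Φ' x)) with hGdef
  have hGcontOn : ContinuousOn G O := by
    apply ContinuousOn.clm_comp hcont
    exact (ContinuousLinearMap.adjoint.continuous.comp_continuousOn hcont)
  have hGcont : ContinuousAt G xb := hGcontOn.continuousAt (hO.mem_nhds hxbO)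
  -- G xb is bijective
  have hker : ∀ y, G xb y = 0 → y = 0 := by
    intro y hy
    have hadj : ContinuousLinearMap.adjoint (Φ' xb) y = 0 := by
      have h1 : (inner ℝ (ContinuousLinearMap.adjoint (Φ' xb) y)
          (ContinuousLinearMap.adjoint (Φ' xb) y) : ℝ) = 0 := by
        rw [ContinuousLinearMap.adjoint_inner_left]
        have : (Φ' xb) (ContinuousLinearMap.adjoint (Φ' xb) y) = G xb y := rfl
        rw [this, hy, inner_zero_right]
      exact inner_self_eq_zero.mp h1
    obtain ⟨u, hu⟩ := hsurj y
    have h2 : (inner ℝ y y : ℝ) = 0 := by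
      calc (inner ℝ y y : ℝ) = inner ℝ y ((Φ' xb) u) := by rw [hu]
        _ = (inner ℝ (ContinuousLinearMap.adjoint (Φ' xb) y) u : ℝ) :=
            (ContinuousLinearMap.adjoint_inner_left _ _ _).symm
        _ = 0 := by rw [hadj, inner_zero_left]
    exact inner_self_eq_zero.mp h2
  have hinj : Function.Injective (G xb) := by
    intro a b hab
    have : G xb (a - b) = 0 := by rw [map_sub, hab, sub_self]
    have := hker _ this
    exact sub_eq_zero.mp this
  have hsurjG : Function.Surjective ((G xb : Euc c →ₗ[ℝ] Euc c)) :=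
    LinearMap.injective_iff_surjective.mp hinj
  set le : Euc c ≃ₗ[ℝ] Euc c :=
    LinearEquiv.ofBijective (G xb : Euc c →ₗ[ℝ] Euc c) ⟨hinj, hsurjG⟩ with hle
  set ce : Euc c ≃L[ℝ] Euc c := le.toContinuousLinearEquiv with hce
  have hcoe : ((ce : Euc c →L[ℝ] Euc c) : Euc c → Euc c) = G xb := by
    have h1 := LinearEquiv.coe_toContinuousLinearEquiv' le
    rw [ContinuousLinearEquiv.coe_coe, h1]
    rfl
  have hmem : G xb ∈ Set.range ((↑) : (Euc c ≃L[ℝ] Euc c) → Euc c →L[ℝ] Euc c) :=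
    ⟨ce, by apply ContinuousLinearMap.ext; intro y; exact congrFun hcoe y⟩
  have hev : ∀ᶠ x in 𝓝 xb,
      G x ∈ Set.range ((↑) : (Euc c ≃L[ℝ] Euc c) → Euc c →L[ℝ] Euc c) :=
    hGcont.eventually (ContinuousLinearEquiv.isOpen.eventually_mem hmem)
  have hev2 := hev.and (hO.eventually_mem hxbO)
  obtain ⟨r, hr, hball⟩ := Metric.eventually_nhds_iff_ball.mp hev2
  refine ⟨r, hr, fun x hx => (hball x hx).2, fun x hx => ?_⟩
  obtain ⟨e, he⟩ := (hball x hx).1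
  intro y
  refine ⟨ContinuousLinearMap.adjoint (Φ' x) (e.symm y), ?_⟩
  have h3 : (Φ' x) (ContinuousLinearMap.adjoint (Φ' x) (e.symm y)) = G x (e.symm y) := rfl
  rw [h3, ← he]
  have h4 : ((e : Euc c →L[ℝ] Euc c) : Euc c → Euc c) (e.symm y) = e (e.symm y) := rfl
  rw [h4, e.apply_symm_apply]

theorem tanCone_subset_ker (hch : IsSmoothMfdChart X xb O Φ Φ') {x : Euc n}
    (hxX : x ∈ X) (hxO : x ∈ O) : tanCone X x ⊆ {w | Φ' x w = 0} := by
  obtain ⟨hO, hxbO, hXO, hderiv, hcont, hsurj⟩ := hch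
  intro w hw
  obtain ⟨t, w', ht0, htlim, hwlim, hmem⟩ := hw
  have hΦx : Φ x = 0 := by
    have hmem2 : x ∈ X ∩ O := ⟨hxX, hxO⟩
    rw [hXO] at hmem2; exact hmem2.2
  have key : ∀ ε > (0:ℝ), ‖(Φ' x) w‖ ≤ ε * ‖w‖ := by
    intro ε hε
    have hsmalle : ∀ᶠ (h : Euc n) in 𝓝 0, ‖Φ (x + h) - Φ x - (Φ' x) h‖ ≤ ε * ‖h‖ :=
      Asymptotics.isLittleO_iff.mp (hasFDerivAt_iff_isLittleO_nhds_zero.mp (hderiv x hxO)) hε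
    have hk : Tendsto (fun k => t k • w' k) atTop (𝓝 0) := by
      have := htlim.smul hwlim
      rwa [zero_smul] at this
    have hOev : ∀ᶠ k in atTop, x + t k • w' k ∈ O := by
      have h5 : Tendsto (fun k => x + t k • w' k) atTop (𝓝 (x + 0)) :=
        tendsto_const_nhds.add hk
      rw [add_zero] at h5
      exact h5.eventually (hO.eventually_mem hxO)
    have hev2 := hk.eventually hsmalle
    have hfinal : ∀ᶠ k in atTop, ‖(Φ' x) (w' k)‖ ≤ ε * ‖w' k‖ := by
      filter_upwards [hOev, hev2] with k h1 h2
      have hΦ0 : Φ (x + t k • w' k) = 0 := by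
        have hmem3 : x + t k • w' k ∈ X ∩ O := ⟨hmem k, h1⟩
        rw [hXO] at hmem3; exact hmem3.2
      rw [hΦ0, hΦx, map_smul, sub_zero, zero_sub, norm_neg, norm_smul, norm_smul,
        Real.norm_eq_abs, abs_of_pos (ht0 k)] at h2
      rw [show ε * (t k * ‖w' k‖) = t k * (ε * ‖w' k‖) by ring] at h2
      exact (mul_le_mul_iff_right₀ (ht0 k)).mp h2
    have hlim1 : Tendsto (fun k => ‖(Φ' x) (w' k)‖) atTop (𝓝 ‖(Φ' x) w‖) :=
      (((Φ' x).continuous.tendsto w).comp hwlim).norm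
    have hlim2 : Tendsto (fun k => ε * ‖w' k‖) atTop (𝓝 (ε * ‖w‖)) :=
      hwlim.norm.const_mul ε
    exact le_of_tendsto_of_tendsto hlim1 hlim2 hfinal
  have h0 : ‖(Φ' x) w‖ ≤ 0 := by
    have hlim : Tendsto (fun k : ℕ => (1/((k:ℝ)+1)) * ‖w‖) atTop (𝓝 0) := by
      have := tendsto_one_div_add_atTop_nhds_zero_nat.mul_const ‖w‖
      rwa [zero_mul] at this
    exact ge_of_tendsto' hlim (fun k => key _ (by positivity))
  exact norm_le_zero_iff.mp h0

end Chart
section Chart2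

variable {n m c : ℕ} {X : Set (Euc n)} {xb : Euc n} {O : Set (Euc n)}
  {Φ : Euc n → Euc c} {Φ' : Euc n → (Euc n →L[ℝ] Euc c)}

theorem ker_subset_tanCone (hch : IsSmoothMfdChart X xb O Φ Φ') {x : Euc n}
    (hxX : x ∈ X) (hxO : x ∈ O) (hsurj : Function.Surjective (Φ' x)) {w : Euc n}
    (hw : (Φ' x) w = 0) : w ∈ tanCone X x := by
  obtain ⟨hO, hxbO, hXO, hderiv, hcont, _⟩ := hch
  have hΦx : Φ x = 0 := by
    have hmem2 : x ∈ X ∩ O := ⟨hxX, hxO⟩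
    rw [hXO] at hmem2; exact hmem2.2
  have hstrict : HasStrictFDerivAt Φ (Φ' x) x :=
    hasStrictFDerivAt_of_hasFDerivAt_of_continuousAt
      (Filter.eventually_of_mem (hO.mem_nhds hxO) (fun y hy => hderiv y hy))
      (hcont.continuousAt (hO.mem_nhds hxO))
  have hrange : (Φ' x).range = ⊤ := LinearMap.range_eq_top.2 hsurj
  have hwker : w ∈ (Φ' x).ker := LinearMap.mem_ker.2 hw
  set wsub : (Φ' x).ker := ⟨w, hwker⟩ with hwsubdef
  set f : ℝ → Euc n := fun τ => hstrict.implicitFunction Φ (Φ' x) hrange (Φ x) (τ • wsub) with hfdef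
  have hg : HasStrictFDerivAt (hstrict.implicitFunction Φ (Φ' x) hrange (Φ x))
      ((Φ' x).ker).subtypeL 0 := hstrict.to_implicitFunction hrange
  have hline : HasDerivAt (fun τ : ℝ => τ • wsub) wsub 0 := by
    simpa using (hasDerivAt_id (0:ℝ)).smul_const wsub
  have hcurve : HasDerivAt f w 0 := by
    have h0 : (0:ℝ) • wsub = 0 := zero_smul _ _
    have := (h0 ▸ hg.hasFDerivAt).comp_hasDerivAt (0:ℝ) hline
    exact this
  have hval0 : f 0 = x := by
    rw [hfdef]
    simp only [zero_smul]
    exact hstrict.implicitFunction_apply_image hrange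
  have hmapev := hstrict.map_implicitFunction_eq hrange
  have htend : Tendsto (fun τ : ℝ => ((Φ x), τ • wsub)) (𝓝 0)
      (𝓝 (Φ x, (0 : (Φ' x).ker))) := by
    apply Tendsto.prodMk_nhds tendsto_const_nhds
    have h6 : Continuous (fun τ : ℝ => τ • wsub) := continuous_id.smul continuous_const
    have := h6.tendsto 0
    simpa using this
  have hΦev : ∀ᶠ τ : ℝ in 𝓝 0, Φ (f τ) = Φ x := htend.eventually hmapev
  have hcont0 : Tendsto f (𝓝 0) (𝓝 x) := hval0 ▸ hcurve.continuousAt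
  have hOev : ∀ᶠ τ : ℝ in 𝓝 0, f τ ∈ O := hcont0.eventually (hO.eventually_mem hxO)
  have hXev : ∀ᶠ τ : ℝ in 𝓝 0, f τ ∈ X := by
    filter_upwards [hΦev, hOev] with τ h1 h2
    have : f τ ∈ X ∩ O := by rw [hXO]; exact ⟨h2, by rw [h1, hΦx]⟩
    exact this.1
  obtain ⟨ε, hε, hball⟩ := Metric.eventually_nhds_iff_ball.mp hXev
  set t : ℕ → ℝ := fun k => (ε/2) * (1/((k:ℝ)+1)) with htdef
  have ht0 : ∀ k, 0 < t k := fun k => by positivity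
  have htlim : Tendsto t atTop (𝓝 0) := by
    have := tendsto_one_div_add_atTop_nhds_zero_nat.const_mul (ε/2)
    rwa [mul_zero] at this
  have htball : ∀ k, t k ∈ Metric.ball (0:ℝ) ε := by
    intro k
    have h7 : (1:ℝ)/((k:ℝ)+1) ≤ 1 := by
      rw [div_le_one (by positivity)]
      simp
    have h8 : t k ≤ ε/2 := by
      rw [htdef]
      calc (ε/2) * (1/((k:ℝ)+1)) ≤ (ε/2) * 1 := by
            apply mul_le_mul_of_nonneg_left h7 (by positivity)
        _ = ε/2 := mul_one _
    simp only [Metric.mem_ball, Real.dist_eq, sub_zero]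
    rw [abs_of_pos (ht0 k)]
    linarith
  refine ⟨t, fun k => slope f 0 (t k), ht0, htlim, ?_, ?_⟩
  · have hslope := hasDerivAt_iff_tendsto_slope.mp hcurve
    have htlim' : Tendsto t atTop (𝓝[≠] (0:ℝ)) := by
      rw [tendsto_nhdsWithin_iff]
      exact ⟨htlim, Filter.Eventually.of_forall (fun k => ne_of_gt (ht0 k))⟩
    exact hslope.comp htlim'
  · intro k
    have hfk : f (t k) ∈ X := hball _ (htball k)
    have h9 : x + t k • slope f 0 (t k) = f (t k) := by
      rw [slope_def_module, sub_zero, hval0, smul_inv_smul₀ (ne_of_gt (ht0 k))]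
      abel
    rw [h9]
    exact hfk

end Chart2
section Invariance

variable {n m c : ℕ} {X : Set (Euc n)} {xb : Euc n} {O : Set (Euc n)}
  {Φ : Euc n → Euc c} {Φ' : Euc n → (Euc n →L[ℝ] Euc c)}

theorem fNormal2_invariance (hch : IsSmoothMfdChart X xb O Φ Φ') {S : Euc n → Set (Euc m)}
    {z' : Euc n × Euc m} (hzO : z'.1 ∈ O) {v : Euc n} {w : Euc m}
    (hvw : (v, w) ∈ fNormal2 (gph (restr S X)) z') (y : Euc c) :
    (v + ContinuousLinearMap.adjoint (Φ' z'.1) y, w) ∈ fNormal2 (gph (restr S X)) z' := by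
  obtain ⟨hO, hxbO, hXO, hderiv, hcont, _⟩ := hch
  obtain ⟨hzD, hfre⟩ := hvw
  have hΦz : Φ z'.1 = 0 := by
    have hx'X : z'.1 ∈ X := hzD.2
    have : z'.1 ∈ X ∩ O := ⟨hx'X, hzO⟩
    rw [hXO] at this; exact this.2
  refine ⟨hzD, ?_⟩
  intro ε hε
  obtain ⟨δ₁, hδ₁, h1⟩ := hfre (ε/2) (by positivity)
  have hder := hasFDerivAt_iff_isLittleO_nhds_zero.mp (hderiv z'.1 hzO)
  have hc : (0:ℝ) < ε / (2 * (‖y‖ + 1)) := by positivity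
  have hsm := Asymptotics.isLittleO_iff.mp hder hc
  obtain ⟨δ₂, hδ₂, h2⟩ := Metric.eventually_nhds_iff_ball.mp hsm
  obtain ⟨δ₃, hδ₃, h3⟩ := Metric.isOpen_iff.mp hO z'.1 hzO
  refine ⟨min δ₁ (min δ₂ δ₃), by positivity, ?_⟩
  intro z'' hz'' hnorm
  have hn1 : ‖z''.1 - z'.1‖ ≤ ‖z'' - z'‖ := by
    have := norm_fst_le (z'' - z')
    simpa using this
  have hnormlt1 : ‖z'' - z'‖ < δ₁ := lt_of_lt_of_le hnorm (min_le_left _ _)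
  have hnormlt2 : ‖z''.1 - z'.1‖ < δ₂ :=
    lt_of_le_of_lt hn1 (lt_of_lt_of_le hnorm (le_trans (min_le_right _ _) (min_le_left _ _)))
  have hnormlt3 : ‖z''.1 - z'.1‖ < δ₃ :=
    lt_of_le_of_lt hn1 (lt_of_lt_of_le hnorm (le_trans (min_le_right _ _) (min_le_right _ _)))
  have hx''O : z''.1 ∈ O := h3 (by simpa [Metric.mem_ball, dist_eq_norm] using hnormlt3)
  have hx''X : z''.1 ∈ X := hz''.2
  have hΦz'' : Φ z''.1 = 0 := by
    have : z''.1 ∈ X ∩ O := ⟨hx''X, hx''O⟩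
    rw [hXO] at this; exact this.2
  have hold := h1 z'' hz'' hnormlt1
  -- bound the adjoint term
  have hkey : (inner ℝ (ContinuousLinearMap.adjoint (Φ' z'.1) y) (z''.1 - z'.1) : ℝ)
      ≤ (ε/2) * ‖z'' - z'‖ := by
    rw [ContinuousLinearMap.adjoint_inner_left]
    have hball : z''.1 - z'.1 ∈ Metric.ball (0 : Euc n) δ₂ := by
      simpa [Metric.mem_ball, dist_eq_norm] using hnormlt2
    have hlo := h2 _ hball
    rw [show z'.1 + (z''.1 - z'.1) = z''.1 by abel, hΦz'', hΦz, sub_zero, zero_sub,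
      norm_neg] at hlo
    calc (inner ℝ y ((Φ' z'.1) (z''.1 - z'.1)) : ℝ)
        ≤ ‖y‖ * ‖(Φ' z'.1) (z''.1 - z'.1)‖ := real_inner_le_norm _ _
      _ ≤ ‖y‖ * (ε / (2 * (‖y‖ + 1)) * ‖z''.1 - z'.1‖) := by
          apply mul_le_mul_of_nonneg_left hlo (norm_nonneg _)
      _ = (‖y‖ * (ε / (2 * (‖y‖ + 1)))) * ‖z''.1 - z'.1‖ := by ring
      _ ≤ (ε/2) * ‖z''.1 - z'.1‖ := by
          apply mul_le_mul_of_nonneg_right _ (norm_nonneg _)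
          rw [show ‖y‖ * (ε / (2 * (‖y‖ + 1))) = ε * ‖y‖ / (2 * (‖y‖+1)) from by ring,
            div_le_div_iff₀ (by positivity) (by positivity)]
          nlinarith [norm_nonneg y, hε.le]
      _ ≤ (ε/2) * ‖z'' - z'‖ := by
          apply mul_le_mul_of_nonneg_left hn1 (by positivity)
  have hsplit : (inner ℝ (v + ContinuousLinearMap.adjoint (Φ' z'.1) y) (z''.1 - z'.1) : ℝ)
      = inner ℝ v (z''.1 - z'.1) + inner ℝ (ContinuousLinearMap.adjoint (Φ' z'.1) y) (z''.1 - z'.1) :=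
    inner_add_left _ _ _
  rw [hsplit]
  have : (ε/2) * ‖z'' - z'‖ + (ε/2) * ‖z'' - z'‖ = ε * ‖z'' - z'‖ := by ring
  linarith [hold, hkey]

theorem lNormal2_invariance (hch : IsSmoothMfdChart X xb O Φ Φ') {S : Euc n → Set (Euc m)}
    {z : Euc n × Euc m} (hzO : z.1 ∈ O) {v : Euc n} {w : Euc m}
    (hvw : (v, w) ∈ lNormal2 (gph (restr S X)) z) (y : Euc c) :
    (v + ContinuousLinearMap.adjoint (Φ' z.1) y, w) ∈ lNormal2 (gph (restr S X)) z := by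
  have hO : IsOpen O := hch.1
  have hcont : ContinuousOn Φ' O := hch.2.2.2.2.1
  obtain ⟨hzD, zk, vk, hfn, hzk, hvk⟩ := hvw
  have hzk1 : Tendsto (fun j => (zk j).1) atTop (𝓝 z.1) :=
    (continuous_fst.tendsto z).comp hzk
  have hOev : ∀ᶠ j in atTop, (zk j).1 ∈ O := hzk1.eventually (hO.eventually_mem hzO)
  obtain ⟨N, hN⟩ := Filter.eventually_atTop.mp hOev
  refine ⟨hzD, fun j => zk (j+N),
    fun j => ((vk (j+N)).1 + ContinuousLinearMap.adjoint (Φ' ((zk (j+N)).1)) y, (vk (j+N)).2),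
    ?_, ?_, ?_⟩
  · intro j
    have hmem := hfn (j+N)
    have := fNormal2_invariance hch (hN (j+N) (Nat.le_add_left N j))
      (show ((vk (j+N)).1, (vk (j+N)).2) ∈ fNormal2 (gph (restr S X)) (zk (j+N)) by
        simpa using hmem) y
    exact this
  · exact hzk.comp (tendsto_add_atTop_nat N)
  · apply Tendsto.prodMk_nhds
    · apply Tendsto.add
      · exact ((continuous_fst.tendsto _).comp hvk).comp (tendsto_add_atTop_nat N)
      · have hadjcont : Continuous (fun A : Euc n →L[ℝ] Euc c =>
            (ContinuousLinearMap.adjoint A) y) :=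
          Continuous.clm_apply ContinuousLinearMap.adjoint.continuous continuous_const
        have hΦ'lim : Tendsto (fun j => Φ' ((zk (j+N)).1)) atTop (𝓝 (Φ' z.1)) :=
          (hcont.continuousAt (hO.mem_nhds hzO)).tendsto.comp
            (hzk1.comp (tendsto_add_atTop_nat N))
        exact (hadjcont.tendsto _).comp hΦ'lim
    · exact ((continuous_snd.tendsto _).comp hvk).comp (tendsto_add_atTop_nat N)

theorem lNormal2_closed {E' F' : Type*} [NormedAddCommGroup E'] [InnerProductSpace ℝ E']
    [NormedAddCommGroup F'] [InnerProductSpace ℝ F'] {D : Set (E' × F')} {zbar q : E' × F'}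
    (hzbar : zbar ∈ D) {ζ ν : ℕ → E' × F'} (hν : ∀ k, ν k ∈ lNormal2 D (ζ k))
    (hζ : Tendsto ζ atTop (𝓝 zbar)) (hνlim : Tendsto ν atTop (𝓝 q)) :
    q ∈ lNormal2 D zbar := by
  refine ⟨hzbar, ?_⟩
  choose hmem z v hfn hz hv using hν
  have hsel : ∀ k : ℕ, ∃ j, dist (z k j) (ζ k) < 1/((k:ℝ)+1) ∧
      dist (v k j) (ν k) < 1/((k:ℝ)+1) := by
    intro k
    obtain ⟨N1, h1⟩ := Metric.tendsto_atTop.mp (hz k) _ (show (0:ℝ) < 1/((k:ℝ)+1) by positivity)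
    obtain ⟨N2, h2⟩ := Metric.tendsto_atTop.mp (hv k) _ (show (0:ℝ) < 1/((k:ℝ)+1) by positivity)
    exact ⟨max N1 N2, h1 _ (le_max_left _ _), h2 _ (le_max_right _ _)⟩
  choose j hj1 hj2 using hsel
  have hlim : ∀ (f : ℕ → E' × F') (a : E' × F') (g : ℕ → E' × F'),
      Tendsto g atTop (𝓝 a) → (∀ k, dist (f k) (g k) < 1/((k:ℝ)+1)) →
      Tendsto f atTop (𝓝 a) := by
    intro f a gg hg hfg
    rw [tendsto_iff_dist_tendsto_zero]
    apply squeeze_zero (g := fun k : ℕ => 1/((k:ℝ)+1) + dist (gg k) a) (fun k => dist_nonneg)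
    · intro k
      calc dist (f k) a ≤ dist (f k) (gg k) + dist (gg k) a := dist_triangle _ _ _
        _ ≤ 1/((k:ℝ)+1) + dist (gg k) a := by linarith [le_of_lt (hfg k)]
    · have := tendsto_one_div_add_atTop_nhds_zero_nat.add
        (tendsto_iff_dist_tendsto_zero.mp hg)
      rwa [zero_add] at this
  exact ⟨fun k => z k (j k), fun k => v k (j k), fun k => hfn k (j k),
    hlim _ _ _ hζ hj1, hlim _ _ _ hνlim hj2⟩

end Invariance
theorem const_mem_projCoderiv {n m : ℕ} {S : Euc n → Set (Euc m)} {X : Set (Euc n)}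
    {x : Euc n} {u : Euc m} {us : Euc m} {v t : Euc n}
    (hz : (x, u) ∈ gph (restr S X))
    (hv : (v, -us) ∈ lNormal2 (gph (restr S X)) (x, u))
    (ht : t ∈ projSet (tanCone X x) v) : t ∈ projCoderiv S X x u us :=
  ⟨fun _ => (x, u), fun _ => (t, -us), fun _ => hz, fun _ => ⟨v, hv, ht⟩,
    tendsto_const_nhds, tendsto_const_nhds⟩


/-- For a smooth manifold `X`, near the reference point the
projectional coderivative equals both the projection of the restricted
coderivative and its intersection with the tangent space. -/
theorem stmt7 {n m : ℕ} (S : Euc n → Set (Euc m)) (X : Set (Euc n))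
    (xb : Euc n) (ub : Euc m) (hX : SmoothManifoldAround X xb)
    (hxb : xb ∈ X) (hub : ub ∈ S xb)
    (hcl : LocallyClosedAt (gph S) (xb, ub)) :
    ∃ δ > 0, ∀ z ∈ gph (restr S X), dist z (xb, ub) < δ → ∀ us : Euc m,
      projCoderiv S X z.1 z.2 us =
        {t : Euc n | ∃ v ∈ coderiv (restr S X) z.1 z.2 us, t ∈ projSet (tanCone X z.1) v} ∧
      projCoderiv S X z.1 z.2 us = coderiv (restr S X) z.1 z.2 us ∩ tanCone X z.1 := by
  obtain ⟨c, O, Φ, Φ', hch⟩ := hX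
  obtain ⟨r, hr, hballO, hballsurj⟩ := chart_ball hch
  refine ⟨r, hr, ?_⟩
  rintro ⟨x, u⟩ hz hdist us
  have hxX : x ∈ X := hz.2
  have hxball : x ∈ Metric.ball xb r := by
    rw [Metric.mem_ball]
    calc dist x xb ≤ dist ((x, u)) ((xb, ub)) := by
          rw [Prod.dist_eq]; exact le_max_left _ _
      _ < r := hdist
  have hxO : x ∈ O := hballO hxball
  have htc : ∀ x' ∈ X, x' ∈ Metric.ball xb r → tanCone X x' = {w | (Φ' x') w = 0} := by
    intro x' hx'X hx'ball
    apply Set.Subset.antisymm (tanCone_subset_ker hch hx'X (hballO hx'ball))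
    intro w hw
    exact ker_subset_tanCone hch hx'X (hballO hx'ball) (hballsurj _ hx'ball) hw
  have hsub : projCoderiv S X x u us ⊆
      coderiv (restr S X) x u us ∩ tanCone X x := by
    intro t ht
    obtain ⟨zk, qk, hzkD, hqk, hzklim, hqklim⟩ := ht
    have hzk1 : Tendsto (fun k => (zk k).1) atTop (𝓝 x) :=
      (continuous_fst.tendsto _).comp hzklim
    have hball_ev : ∀ᶠ k in atTop, (zk k).1 ∈ Metric.ball xb r :=
      hzk1.eventually (Metric.isOpen_ball.eventually_mem hxball)
    obtain ⟨N, hN⟩ := Filter.eventually_atTop.mp hball_ev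
    set Z : ℕ → Euc n × Euc m := fun k => zk (k+N) with hZ
    set Q : ℕ → Euc n × Euc m := fun k => qk (k+N) with hQ
    have hZD : ∀ k, Z k ∈ gph (restr S X) := fun k => hzkD _
    have hZball : ∀ k, (Z k).1 ∈ Metric.ball xb r := fun k => hN _ (Nat.le_add_left N k)
    have hZX : ∀ k, (Z k).1 ∈ X := fun k => (hZD k).2
    have hZlim : Tendsto Z atTop (𝓝 (x, u)) := hzklim.comp (tendsto_add_atTop_nat N)
    have hQlim : Tendsto Q atTop (𝓝 (t, -us)) := hqklim.comp (tendsto_add_atTop_nat N)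
    have hmain : ∀ k, Q k ∈ lNormal2 (gph (restr S X)) (Z k) ∧
        (Φ' ((Z k).1)) ((Q k).1) = 0 := by
      intro k
      obtain ⟨v, hvl, hvproj⟩ := hqk (k+N)
      have htceq := htc _ (hZX k) (hZball k)
      rw [htceq] at hvproj
      have hker1 : (Φ' ((Z k).1)) ((Q k).1) = 0 := hvproj.1
      have horth := proj_orth hvproj
      have horth' : ∀ s, (Φ' ((Z k).1)) s = 0 → (inner ℝ ((Q k).1 - v) s : ℝ) = 0 := by
        intro s hs
        have h5 := horth s hs
        rw [show ((Q k).1 - v) = -(v - (Q k).1) by abel, inner_neg_left, h5, neg_zero]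
      obtain ⟨y, hy⟩ := mem_range_adjoint (Φ' ((Z k).1)) horth'
      have hinv := lNormal2_invariance hch (hballO (hZball k)) hvl y
      rw [← hy] at hinv
      have heq : (v + ((Q k).1 - v), (Q k).2) = Q k := by
        rw [show v + ((Q k).1 - v) = (Q k).1 by abel]
      rw [heq] at hinv
      exact ⟨hinv, hker1⟩
    have hcod : (t, -us) ∈ lNormal2 (gph (restr S X)) (x, u) :=
      lNormal2_closed hz (fun k => (hmain k).1) hZlim hQlim
    have hker : (Φ' x) t = 0 := by
      have h1 : Tendsto (fun k => (Z k).1) atTop (𝓝 x) :=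
        (continuous_fst.tendsto _).comp hZlim
      have h2 : Tendsto (fun k => (Q k).1) atTop (𝓝 t) :=
        (continuous_fst.tendsto _).comp hQlim
      have h3 : Tendsto (fun k => Φ' ((Z k).1)) atTop (𝓝 (Φ' x)) :=
        ((hch.2.2.2.2.1.continuousAt (hch.1.mem_nhds hxO)).tendsto).comp h1
      have happ : Tendsto (fun k => (Φ' ((Z k).1)) ((Q k).1)) atTop (𝓝 ((Φ' x) t)) := by
        have h4 := (isBoundedBilinearMap_apply.continuous.tendsto ((Φ' x), t)).comp
          (h3.prodMk_nhds h2)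
        exact h4
      have hzero : ∀ k, (Φ' ((Z k).1)) ((Q k).1) = 0 := fun k => (hmain k).2
      have happ' : Tendsto (fun _ : ℕ => (0 : Euc c)) atTop (𝓝 ((Φ' x) t)) := by
        simpa only [hzero] using happ
      exact (tendsto_nhds_unique happ' tendsto_const_nhds)
    refine ⟨hcod, ?_⟩
    rw [htc x hxX hxball]
    exact hker
  constructor
  · apply Set.Subset.antisymm
    · intro t ht
      obtain ⟨hcod, htan⟩ := hsub ht
      exact ⟨t, hcod, projSet_self htan⟩
    · rintro t ⟨v, hvcod, hvproj⟩
      exact const_mem_projCoderiv hz hvcod hvproj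
  · apply Set.Subset.antisymm hsub
    rintro t ⟨hcod, htan⟩
    exact const_mem_projCoderiv hz hcod (projSet_self htan)
end
end

section
/- Let F : ℝⁿ → ℝᵐ be continuously differentiable and X ⊆ ℝⁿ a smooth manifold around x̄ ∈ X. Then the projectional coderivative of F relative to X at x̄ admits the fixed-point expression D*_X F(x̄)(y) = { proj_{T_X(x̄)}(∇F(x̄)* y) } for every y ∈ ℝᵐ. -/
open Filter Topology Set Metric
open scoped ENNReal NNReal

noncomputable section

variable {E F : Type*}

namespace Stmt9Aux
open ContinuousLinearMap Asymptotics

/-! ### Generic slope lemma -/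

lemma tendsto_slope {E' F' : Type*} [NormedAddCommGroup E'] [NormedSpace ℝ E']
    [NormedAddCommGroup F'] [NormedSpace ℝ F'] {g : E' → F'} {A : E' →L[ℝ] F'} {x : E'}
    (hg : HasFDerivAt g A x) {t : ℕ → ℝ} {w' : ℕ → E'} {w : E'}
    (ht0 : ∀ k, 0 < t k) (ht : Tendsto t atTop (𝓝 0)) (hw : Tendsto w' atTop (𝓝 w)) :
    Tendsto (fun k => (t k)⁻¹ • (g (x + t k • w' k) - g x)) atTop (𝓝 (A w)) := by
  set h : ℕ → E' := fun k => t k • w' k with hh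
  have hhk : Tendsto h atTop (𝓝 0) := by
    have := ht.smul hw
    rwa [zero_smul] at this
  set r : ℕ → F' := fun k => g (x + h k) - g x - A (h k) with hr
  have hlo : (fun k => r k) =o[atTop] (fun k => h k) := by
    have h1 := hg.isLittleO
    have h2 : Tendsto (fun k => x + h k) atTop (𝓝 x) := by
      have := tendsto_const_nhds (x := x) (f := atTop (α := ℕ)) |>.add hhk
      rwa [add_zero] at this
    have h3 := h1.comp_tendsto h2
    simp only [Function.comp_def, add_sub_cancel_left] at h3
    exact h3
  have hOB : (fun k => h k) =O[atTop] (fun k => t k) := by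
    rw [isBigO_iff]
    refine ⟨‖w‖ + 1, ?_⟩
    have hev : ∀ᶠ k in atTop, ‖w' k‖ ≤ ‖w‖ + 1 := by
      have h2 : ∀ᶠ k in atTop, ‖w' k‖ < ‖w‖ + 1 :=
        hw.norm.eventually_lt_const (by linarith)
      exact h2.mono fun k hk => hk.le
    refine hev.mono fun k hk => ?_
    have h3 : ‖h k‖ = t k * ‖w' k‖ := by
      rw [hh]; simp [norm_smul, abs_of_pos (ht0 k)]
    rw [h3, Real.norm_eq_abs, abs_of_pos (ht0 k)]
    nlinarith [(ht0 k).le, norm_nonneg (w' k)]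
  have hlot : (fun k => ‖r k‖) =o[atTop] (fun k => t k) := (hlo.trans_isBigO hOB).norm_left
  have hdiv : Tendsto (fun k => ‖r k‖ / t k) atTop (𝓝 0) := hlot.tendsto_div_nhds_zero
  have hfirst : Tendsto (fun k => (t k)⁻¹ • r k) atTop (𝓝 0) := by
    rw [tendsto_zero_iff_norm_tendsto_zero]
    refine hdiv.congr fun k => ?_
    rw [norm_smul, Real.norm_eq_abs, abs_inv, abs_of_pos (ht0 k), div_eq_inv_mul]
  have hsecond : Tendsto (fun k => A (w' k)) atTop (𝓝 (A w)) :=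
    (A.continuous.tendsto w).comp hw
  have hkey : ∀ k, (t k)⁻¹ • (g (x + t k • w' k) - g x) = (t k)⁻¹ • r k + A (w' k) := by
    intro k
    have hA : A (h k) = t k • A (w' k) := by rw [hh]; simp
    rw [hr]
    rw [smul_sub, smul_sub, hA, smul_smul, inv_mul_cancel₀ (ht0 k).ne', one_smul]
    module
  have hsum := hfirst.add hsecond
  rw [zero_add] at hsum
  exact hsum.congr fun k => (hkey k).symm

lemma tendsto_clm_apply {α E' F' : Type*} [NormedAddCommGroup E'] [NormedSpace ℝ E']
    [NormedAddCommGroup F'] [NormedSpace ℝ F'] {l : Filter α} {Mk : α → E' →L[ℝ] F'}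
    {sk : α → E'} {M : E' →L[ℝ] F'} {s : E'} (hM : Tendsto Mk l (𝓝 M))
    (hs : Tendsto sk l (𝓝 s)) : Tendsto (fun a => Mk a (sk a)) l (𝓝 (M s)) :=
  ((isBoundedBilinearMap_apply (𝕜 := ℝ)).continuous.tendsto (M, s)).comp (hM.prodMk_nhds hs)

/-! ### The projection `Pm` onto the kernel of a surjective map -/

variable {n m c : ℕ}

def Gm (T : Euc n →L[ℝ] Euc c) : Euc c →L[ℝ] Euc c := T ∘L adjoint T

def Pm (T : Euc n →L[ℝ] Euc c) : Euc n →L[ℝ] Euc n :=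
  ContinuousLinearMap.id ℝ (Euc n) - (adjoint T) ∘L ((Ring.inverse (Gm T)) ∘L T)

lemma isUnit_Gm {T : Euc n →L[ℝ] Euc c} (h : Function.Surjective T) : IsUnit (Gm T) := by
  have hinj : Function.Injective (Gm T) := by
    intro u v huv
    have h0 : Gm T (u - v) = 0 := by simp [map_sub, huv]
    have h1 : adjoint T (u - v) = 0 := by
      have h2 : (inner ℝ (adjoint T (u - v)) (adjoint T (u - v)) : ℝ) = 0 := by
        rw [adjoint_inner_left]
        rw [show T (adjoint T (u - v)) = 0 from h0]
        simp
      exact inner_self_eq_zero.mp h2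
    have h2 : u - v = 0 := by
      obtain ⟨w, hw⟩ := h (u - v)
      have h3 : (inner ℝ (u - v) (u - v) : ℝ) = (inner ℝ (adjoint T (u - v)) w : ℝ) := by
        rw [adjoint_inner_left, hw]
      rw [h1] at h3; simp at h3
      exact h3
    exact sub_eq_zero.mp h2
  exact isUnit_iff_bijective.mpr
    ⟨hinj, (LinearMap.injective_iff_surjective (f := (Gm T).toLinearMap)).mp hinj⟩

lemma surj_of_isUnit_Gm {T : Euc n →L[ℝ] Euc c} (h : IsUnit (Gm T)) :
    Function.Surjective T := by
  intro z
  refine ⟨adjoint T (Ring.inverse (Gm T) z), ?_⟩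
  have h1 : T (adjoint T (Ring.inverse (Gm T) z)) = (Gm T * Ring.inverse (Gm T)) z := rfl
  rw [h1, Ring.mul_inverse_cancel _ h]
  rfl

variable {T : Euc n →L[ℝ] Euc c}

lemma T_Pm (hu : IsUnit (Gm T)) (v : Euc n) : T (Pm T v) = 0 := by
  have h : Gm T (Ring.inverse (Gm T) (T v)) = T v := by
    have h4 := Ring.mul_inverse_cancel _ hu
    calc Gm T (Ring.inverse (Gm T) (T v)) = (Gm T * Ring.inverse (Gm T)) (T v) := rfl
    _ = T v := by rw [h4]; rfl
  simp only [Pm, ContinuousLinearMap.sub_apply, ContinuousLinearMap.comp_apply, map_sub,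
    ContinuousLinearMap.id_apply]
  calc T v - T (adjoint T ((Ring.inverse (Gm T)) (T v)))
      = T v - Gm T (Ring.inverse (Gm T) (T v)) := rfl
  _ = 0 := by rw [h]; simp

lemma inner_sub_Pm (v : Euc n) {w : Euc n} (hw : T w = 0) :
    (inner ℝ (v - Pm T v) w : ℝ) = 0 := by
  have h : v - Pm T v = adjoint T ((Ring.inverse (Gm T)) (T v)) := by
    simp [Pm, ContinuousLinearMap.sub_apply, ContinuousLinearMap.comp_apply]
  rw [h, adjoint_inner_left, hw]; simp

lemma Pm_eq_zero_iff (hu : IsUnit (Gm T)) (v : Euc n) :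
    Pm T v = 0 ↔ ∀ w, T w = 0 → (inner ℝ v w : ℝ) = 0 := by
  constructor
  · intro h w hw
    have h5 := inner_sub_Pm v hw
    rw [h] at h5; simpa using h5
  · intro h
    have h1 : (inner ℝ (Pm T v) (Pm T v) : ℝ) = 0 := by
      have hker := T_Pm hu v
      have h2 := inner_sub_Pm v hker
      have h3 := h _ hker
      have h6 : (inner ℝ v (Pm T v) : ℝ) - (inner ℝ (Pm T v) (Pm T v) : ℝ) = 0 := by
        simpa [inner_sub_left] using h2
      rw [h3] at h6; linarith
    exact inner_self_eq_zero.mp h1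

/-! ### Continuity -/

lemma continuous_adjoint_comp {α : Type*} [TopologicalSpace α] {g : α → Euc n →L[ℝ] Euc c}
    {s : Set α} (hg : ContinuousOn g s) :
    ContinuousOn (fun x => adjoint (g x)) s := by
  have h : Continuous (fun T : Euc n →L[ℝ] Euc c => adjoint T) :=
    (ContinuousLinearMap.adjoint : (Euc n →L[ℝ] Euc c) ≃ₗᵢ⋆[ℝ] (Euc c →L[ℝ] Euc n)).continuous
  exact h.comp_continuousOn hg

lemma continuousOn_Pm {α : Type*} [TopologicalSpace α] {g : α → Euc n →L[ℝ] Euc c}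
    {s : Set α} (hg : ContinuousOn g s) (hunit : ∀ x ∈ s, IsUnit (Gm (g x))) :
    ContinuousOn (fun x => Pm (g x)) s := by
  have hGm : ContinuousOn (fun x => Gm (g x)) s := hg.clm_comp (continuous_adjoint_comp hg)
  have hinv : ContinuousOn (fun x => Ring.inverse (Gm (g x))) s := by
    intro x hx
    have h1 : ContinuousAt Ring.inverse (Gm (g x)) := by
      obtain ⟨u, hu⟩ := hunit x hx
      rw [← hu]
      exact NormedRing.inverse_continuousAt u
    exact ContinuousAt.comp_continuousWithinAt (f := fun x => Gm (g x)) h1 (hGm x hx)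
  apply ContinuousOn.sub continuousOn_const
  exact (continuous_adjoint_comp hg).clm_comp (hinv.clm_comp hg)

/-! ### Nearest-point projection onto the kernel -/

lemma projSet_eq_of_perp {K : Set (Euc n)} {v p : Euc n} (hp : p ∈ K)
    (hperp : ∀ y ∈ K, (inner ℝ (v - p) (y - p) : ℝ) = 0) : projSet K v = {p} := by
  have key : ∀ y ∈ K, ‖v - p‖ ^ 2 + ‖p - y‖ ^ 2 = ‖v - y‖ ^ 2 := by
    intro y hy
    have h1 : v - y = (v - p) + (p - y) := by abel
    have h2 : (inner ℝ (v - p) (p - y) : ℝ) = 0 := by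
      have h4 := hperp y hy
      have h3 : p - y = -(y - p) := by abel
      rw [h3, inner_neg_right, h4, neg_zero]
    rw [h1, norm_add_sq_real, h2]; ring
  have hle : ∀ y ∈ K, ‖v - p‖ ≤ ‖v - y‖ := by
    intro y hy
    have := key y hy
    nlinarith [norm_nonneg (v - y), norm_nonneg (v - p), norm_nonneg (p - y)]
  have hdist : Metric.infDist v K = ‖v - p‖ := by
    apply le_antisymm
    · have h0 := Metric.infDist_le_dist_of_mem (x := v) hp
      rwa [dist_eq_norm] at h0
    · rw [Metric.infDist_eq_iInf]
      have : Nonempty K := ⟨⟨p, hp⟩⟩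
      apply le_ciInf
      intro y
      rw [dist_eq_norm]
      exact hle y y.2
  ext q
  simp only [projSet, Set.mem_setOf_eq, Set.mem_singleton_iff]
  constructor
  · rintro ⟨hq, hnorm⟩
    rw [hdist] at hnorm
    have h5 := key q hq
    have h6 : ‖p - q‖ ^ 2 = 0 := by rw [hnorm] at h5; nlinarith
    have h7 : ‖p - q‖ = 0 := by nlinarith [norm_nonneg (p - q)]
    exact (sub_eq_zero.mp (norm_eq_zero.mp h7)).symm
  · rintro rfl
    exact ⟨hp, hdist.symm⟩

lemma projSet_ker_eq (hu : IsUnit (Gm T)) (v : Euc n) :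
    projSet {w | T w = 0} v = {Pm T v} := by
  refine projSet_eq_of_perp ?_ ?_
  · show T (Pm T v) = 0
    exact T_Pm hu v
  · intro z hz
    have hz' : T z = 0 := hz
    exact inner_sub_Pm v (by rw [map_sub, hz', T_Pm hu v, sub_zero])

/-! ### Tangent cone of the manifold -/

lemma seq_t_pos (ε : ℝ) (hε : 0 < ε) (k : ℕ) : 0 < ε / ((k : ℝ) + 2) := by positivity

lemma seq_t_tendsto (ε : ℝ) : Tendsto (fun k : ℕ => ε / ((k : ℝ) + 2)) atTop (𝓝 0) := by
  have h1 : Tendsto (fun k : ℕ => ((k : ℝ) + 2)) atTop atTop :=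
    tendsto_natCast_atTop_atTop.atTop_add tendsto_const_nhds
  exact Tendsto.div_atTop tendsto_const_nhds h1

lemma tanCone_eq_ker {X O : Set (Euc n)} {Φ : Euc n → Euc c} (hO : IsOpen O)
    (hXO : X ∩ O = {x | x ∈ O ∧ Φ x = 0}) {x : Euc n} (hxX : x ∈ X) (hxO : x ∈ O)
    (hstrict : HasStrictFDerivAt Φ T x) (hsurj : Function.Surjective T) :
    tanCone X x = {w | T w = 0} := by
  have hΦx : Φ x = 0 := by
    have hmem : x ∈ X ∩ O := ⟨hxX, hxO⟩
    rw [hXO] at hmem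
    exact hmem.2
  ext w
  constructor
  · rintro ⟨t, w', ht0, ht, hw, hmem⟩
    have hq := tendsto_slope hstrict.hasFDerivAt ht0 ht hw
    have hsmall : Tendsto (fun k => x + t k • w' k) atTop (𝓝 x) := by
      have h2 := ht.smul hw
      rw [zero_smul] at h2
      have h3 := tendsto_const_nhds (x := x) (f := atTop (α := ℕ)) |>.add h2
      rwa [add_zero] at h3
    have hevO : ∀ᶠ k in atTop, x + t k • w' k ∈ O := hsmall.eventually (hO.eventually_mem hxO)
    have heq : (fun k => (t k)⁻¹ • (Φ (x + t k • w' k) - Φ x)) =ᶠ[atTop] (fun _ => 0) := by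
      refine hevO.mono fun k hk => ?_
      have hXk : x + t k • w' k ∈ X ∩ O := ⟨hmem k, hk⟩
      rw [hXO] at hXk
      simp only [Set.mem_setOf_eq] at hXk
      simp only [hXk.2, hΦx, sub_zero, smul_zero]
    have h0 : Tendsto (fun _ : ℕ => (0 : Euc c)) atTop (𝓝 (T w)) := (tendsto_congr' heq).mp hq
    exact Set.mem_setOf_eq ▸ (tendsto_nhds_unique h0 tendsto_const_nhds)
  · intro hw
    have hrange : LinearMap.range (T : Euc n →ₗ[ℝ] Euc c) = ⊤ := LinearMap.range_eq_top.mpr hsurj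
    set ψ := hstrict.implicitFunction Φ T hrange with hψ
    have hwker : w ∈ LinearMap.ker (T : Euc n →ₗ[ℝ] Euc c) := LinearMap.mem_ker.mpr hw
    set wb : LinearMap.ker (T : Euc n →ₗ[ℝ] Euc c) := ⟨w, hwker⟩ with hwb
    set curve : ℝ → Euc n := fun s => ψ (Φ x) (s • wb) with hcurve
    have hc0 : curve 0 = x := by
      rw [hcurve]; simp only [zero_smul]
      exact hstrict.implicitFunction_apply_image hrange
    have hcd : HasFDerivAt curve
        (((LinearMap.ker (T : Euc n →ₗ[ℝ] Euc c)).subtypeL).comp ((1 : ℝ →L[ℝ] ℝ).smulRight wb)) 0 := by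
      have h1 : HasStrictFDerivAt (ψ (Φ x)) (LinearMap.ker (T : Euc n →ₗ[ℝ] Euc c)).subtypeL 0 :=
        hstrict.to_implicitFunction hrange
      have h2 : HasStrictFDerivAt (fun s : ℝ => s • wb) ((1 : ℝ →L[ℝ] ℝ).smulRight wb) 0 := by
        have := ((1 : ℝ →L[ℝ] ℝ).smulRight wb).hasStrictFDerivAt (x := (0 : ℝ))
        convert this using 1
        funext s
        simp
      have h1' : HasStrictFDerivAt (ψ (Φ x)) (LinearMap.ker (T : Euc n →ₗ[ℝ] Euc c)).subtypeL
          ((fun s : ℝ => s • wb) 0) := by simpa using h1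
      have h3 := h1'.comp (0 : ℝ) h2
      exact h3.hasFDerivAt
    have hDone : (((LinearMap.ker (T : Euc n →ₗ[ℝ] Euc c)).subtypeL).comp ((1 : ℝ →L[ℝ] ℝ).smulRight wb)) 1 = w := by
      simp [hwb]
    have hevΦ : ∀ᶠ s in 𝓝 (0 : ℝ), Φ (curve s) = Φ x := by
      have hmap := hstrict.map_implicitFunction_eq hrange
      have htend : Tendsto (fun s : ℝ => ((Φ x, s • wb) : Euc c × LinearMap.ker (T : Euc n →ₗ[ℝ] Euc c))) (𝓝 0)
          (𝓝 (Φ x, 0)) := by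
        apply Tendsto.prodMk_nhds tendsto_const_nhds
        have h5 : Tendsto (fun s : ℝ => s • wb) (𝓝 0) (𝓝 ((0 : ℝ) • wb)) :=
          (continuous_id.smul continuous_const).tendsto 0
        rwa [zero_smul] at h5
      exact htend.eventually hmap
    have hevO : ∀ᶠ s in 𝓝 (0 : ℝ), curve s ∈ O := by
      have hcont : ContinuousAt curve 0 := hcd.continuousAt
      have h6 := hcont.tendsto
      rw [hc0] at h6
      exact h6.eventually (hO.eventually_mem hxO)
    obtain ⟨ε, hε, hball⟩ := Metric.eventually_nhds_iff.mp (hevΦ.and hevO)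
    refine ⟨fun k => ε / ((k : ℝ) + 2),
      fun k => (ε / ((k : ℝ) + 2))⁻¹ • (curve (ε / ((k : ℝ) + 2)) - x),
      seq_t_pos ε hε, seq_t_tendsto ε, ?_, ?_⟩
    · have h7 := tendsto_slope hcd (seq_t_pos ε hε) (seq_t_tendsto ε)
        (tendsto_const_nhds (x := (1 : ℝ)))
      rw [hDone] at h7
      refine h7.congr fun k => ?_
      rw [hc0]
      congr 2
      simp
    · intro k
      have htk : dist (ε / ((k : ℝ) + 2)) 0 < ε := by
        rw [Real.dist_eq, sub_zero, abs_of_pos (seq_t_pos ε hε k)]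
        rw [div_lt_iff₀ (by positivity)]
        nlinarith [hε]
      obtain ⟨hΦs, hOs⟩ := hball htk
      have hsmul : (ε / ((k : ℝ) + 2)) • (ε / ((k : ℝ) + 2))⁻¹ •
          (curve (ε / ((k : ℝ) + 2)) - x) = curve (ε / ((k : ℝ) + 2)) - x := by
        rw [smul_inv_smul₀ (seq_t_pos ε hε k).ne']
      rw [hsmul]
      have hmem : curve (ε / ((k : ℝ) + 2)) ∈ X ∩ O := by
        rw [hXO]
        exact ⟨hOs, by rw [hΦs, hΦx]⟩
      have h8 : x + (curve (ε / ((k : ℝ) + 2)) - x) = curve (ε / ((k : ℝ) + 2)) := by abel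
      rw [h8]
      exact hmem.1

/-! ### Fréchet normals to the graph of `f` restricted to `X` -/

lemma mem_gph_restr {X : Set (Euc n)} {f : Euc n → Euc m} {z : Euc n × Euc m} :
    z ∈ gph (restr (fun x => {f x}) X) ↔ z.2 = f z.1 ∧ z.1 ∈ X := by
  simp [gph, restr]

lemma fNormal2_graph_mem {X : Set (Euc n)} {f : Euc n → Euc m} {x : Euc n}
    {A : Euc n →L[ℝ] Euc m} (hx : x ∈ X) (hd : HasFDerivAt f A x) (y : Euc m) :
    ((adjoint A) y, -y) ∈ fNormal2 (gph (restr (fun x => {f x}) X)) (x, f x) := by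
  constructor
  · exact mem_gph_restr.mpr ⟨rfl, hx⟩
  · intro ε hε
    have hε' : 0 < ε / (‖y‖ + 1) := by positivity
    have hlo := hd.isLittleO.def hε'
    obtain ⟨δ, hδ, hball⟩ := Metric.eventually_nhds_iff.mp hlo
    refine ⟨δ, hδ, ?_⟩
    rintro ⟨x', u'⟩ hz' hnear
    obtain ⟨hu', hx'X⟩ := mem_gph_restr.mp hz'
    simp only at hu' ⊢
    subst hu'
    have hfst : ‖x' - x‖ ≤ ‖(x', f x') - ((x : Euc n), f x)‖ := by
      rw [Prod.norm_def]
      exact le_max_left _ _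
    have hx'near : dist x' x < δ := by
      rw [dist_eq_norm]
      exact lt_of_le_of_lt hfst hnear
    have hball' := hball hx'near
    have hCS : (inner ℝ ((adjoint A) y) (x' - x) : ℝ) + (inner ℝ (-y) (f x' - f x) : ℝ)
        = (inner ℝ y (A (x' - x) - (f x' - f x)) : ℝ) := by
      rw [adjoint_inner_left, inner_neg_left]
      simp only [inner_sub_right]
      ring
    rw [hCS]
    calc (inner ℝ y (A (x' - x) - (f x' - f x)) : ℝ)
        ≤ ‖y‖ * ‖A (x' - x) - (f x' - f x)‖ := real_inner_le_norm _ _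
      _ = ‖y‖ * ‖f x' - f x - A (x' - x)‖ := by rw [norm_sub_rev]
      _ ≤ ‖y‖ * (ε / (‖y‖ + 1) * ‖x' - x‖) := by
          apply mul_le_mul_of_nonneg_left _ (norm_nonneg y)
          exact hball'
      _ ≤ ε * ‖x' - x‖ := by
          rw [← mul_assoc]
          apply mul_le_mul_of_nonneg_right _ (norm_nonneg _)
          calc ‖y‖ * (ε / (‖y‖ + 1)) = ε * (‖y‖ / (‖y‖ + 1)) := by ring
            _ ≤ ε * 1 := by
                apply mul_le_mul_of_nonneg_left _ hε.le
                exact (div_le_one (by positivity)).mpr (by linarith [norm_nonneg y])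
            _ = ε := mul_one ε
      _ ≤ ε * ‖(x', f x') - ((x : Euc n), f x)‖ := mul_le_mul_of_nonneg_left hfst hε.le

lemma fNormal2_graph_perp {X : Set (Euc n)} {f : Euc n → Euc m} {x : Euc n}
    {A : Euc n →L[ℝ] Euc m} (hfd : HasFDerivAt f A x)
    (htan : ∀ w, T w = 0 → w ∈ tanCone X x) {v : Euc n} {u : Euc m}
    (h : (v, u) ∈ fNormal2 (gph (restr (fun x => {f x}) X)) (x, f x)) :
    ∀ w, T w = 0 → (inner ℝ (v + (adjoint A) u) w : ℝ) = 0 := by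
  have hhalf : ∀ w, T w = 0 → (inner ℝ (v + (adjoint A) u) w : ℝ) ≤ 0 := by
    intro w hw
    obtain ⟨t, w', ht0, ht, hww, hmem⟩ := htan w hw
    set q : ℕ → Euc m := fun k => (t k)⁻¹ • (f (x + t k • w' k) - f x) with hqdef
    have hq : Tendsto q atTop (𝓝 (A w)) := tendsto_slope hfd ht0 ht hww
    have hkey : ∀ ε > 0, (inner ℝ (v + (adjoint A) u) w : ℝ) ≤ ε * (‖w‖ + ‖A w‖) := by
      intro ε hε
      obtain ⟨δ, hδ, hineq⟩ := h.2 ε hε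
      have hsmall : Tendsto (fun k => x + t k • w' k) atTop (𝓝 x) := by
        have h2 := ht.smul hww
        rw [zero_smul] at h2
        have h3 := tendsto_const_nhds (x := x) (f := atTop (α := ℕ)) |>.add h2
        rwa [add_zero] at h3
      have hz' : Tendsto (fun k => ((x + t k • w' k, f (x + t k • w' k)) : Euc n × Euc m))
          atTop (𝓝 (x, f x)) :=
        hsmall.prodMk_nhds ((hfd.continuousAt.tendsto).comp hsmall)
      have hev : ∀ᶠ k in atTop,
          ‖((x + t k • w' k, f (x + t k • w' k)) : Euc n × Euc m) - (x, f x)‖ < δ := by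
        have h9 := hz'.eventually (Metric.ball_mem_nhds (x := ((x : Euc n), f x)) hδ)
        exact h9.mono fun k hk => by rwa [dist_eq_norm] at hk
      have hevineq : ∀ᶠ k in atTop,
          (inner ℝ v (w' k) : ℝ) + (inner ℝ u (q k) : ℝ) ≤ ε * (‖w' k‖ + ‖q k‖) := by
        refine hev.mono fun k hk => ?_
        have hk1 := hineq _ (mem_gph_restr.mpr ⟨rfl, hmem k⟩) hk
        simp only at hk1
        have hsm : f (x + t k • w' k) - f x = t k • q k := by
          rw [hqdef]
          simp only
          rw [smul_inv_smul₀ (ht0 k).ne']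
        have hfst : (x + t k • w' k) - x = t k • w' k := by abel
        rw [hfst, hsm, real_inner_smul_right, real_inner_smul_right] at hk1
        have hnorm : ‖((x + t k • w' k, f (x + t k • w' k)) : Euc n × Euc m) - (x, f x)‖
            ≤ t k * (‖w' k‖ + ‖q k‖) := by
          have heq : ((x + t k • w' k, f (x + t k • w' k)) : Euc n × Euc m) - (x, f x)
              = (t k • w' k, t k • q k) := by
            rw [Prod.mk_sub_mk, hfst, hsm]
          rw [heq, Prod.norm_def]
          simp only [norm_smul, Real.norm_eq_abs, abs_of_pos (ht0 k)]
          apply max_le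
          · nlinarith [(ht0 k).le, norm_nonneg (w' k), norm_nonneg (q k)]
          · nlinarith [(ht0 k).le, norm_nonneg (w' k), norm_nonneg (q k)]
        have hchain : t k * ((inner ℝ v (w' k) : ℝ) + (inner ℝ u (q k) : ℝ))
            ≤ t k * (ε * (‖w' k‖ + ‖q k‖)) := by
          calc t k * ((inner ℝ v (w' k) : ℝ) + (inner ℝ u (q k) : ℝ))
              = t k * (inner ℝ v (w' k) : ℝ) + t k * (inner ℝ u (q k) : ℝ) := by ring
            _ ≤ ε * ‖((x + t k • w' k, f (x + t k • w' k)) : Euc n × Euc m) - (x, f x)‖ := hk1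
            _ ≤ ε * (t k * (‖w' k‖ + ‖q k‖)) := mul_le_mul_of_nonneg_left hnorm hε.le
            _ = t k * (ε * (‖w' k‖ + ‖q k‖)) := by ring
        exact le_of_mul_le_mul_left hchain (ht0 k)
      have hlhs : Tendsto (fun k => (inner ℝ v (w' k) : ℝ) + (inner ℝ u (q k) : ℝ)) atTop
          (𝓝 ((inner ℝ v w : ℝ) + (inner ℝ u (A w) : ℝ))) :=
        ((tendsto_const_nhds.inner hww).add (tendsto_const_nhds.inner hq))
      have hrhs : Tendsto (fun k => ε * (‖w' k‖ + ‖q k‖)) atTop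
          (𝓝 (ε * (‖w‖ + ‖A w‖))) :=
        (hww.norm.add hq.norm).const_mul ε
      have hle := le_of_tendsto_of_tendsto hlhs hrhs hevineq
      calc (inner ℝ (v + (adjoint A) u) w : ℝ)
          = (inner ℝ v w : ℝ) + (inner ℝ u (A w) : ℝ) := by
            rw [inner_add_left, adjoint_inner_left]
        _ ≤ ε * (‖w‖ + ‖A w‖) := hle
    by_contra hpos
    push_neg at hpos
    set s := (inner ℝ (v + (adjoint A) u) w : ℝ)
    set M := ‖w‖ + ‖A w‖ with hM
    have hM0 : 0 ≤ M := by positivity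
    have hk2 := hkey (s / (2 * (M + 1))) (by positivity)
    rw [div_mul_eq_mul_div, le_div_iff₀ (by positivity)] at hk2
    nlinarith
  intro w hw
  have h1 := hhalf w hw
  have h2 := hhalf (-w) (by rw [map_neg, hw, neg_zero])
  rw [inner_neg_right] at h2
  linarith

/-! ### Chart-level lemmas -/

variable {n m c : ℕ} {X : Set (Euc n)} {O : Set (Euc n)} {Φ : Euc n → Euc c}
  {Φ' : Euc n → Euc n →L[ℝ] Euc c}

def good (O : Set (Euc n)) (Φ' : Euc n → Euc n →L[ℝ] Euc c) : Set (Euc n) :=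
  O ∩ (fun x => Gm (Φ' x)) ⁻¹' {S | IsUnit S}

lemma good_open (hO : IsOpen O) (hcont : ContinuousOn Φ' O) : IsOpen (good O Φ') := by
  have hGm : ContinuousOn (fun x => Gm (Φ' x)) O :=
    hcont.clm_comp (continuous_adjoint_comp hcont)
  exact hGm.isOpen_inter_preimage hO Units.isOpen

lemma strict_of_good (hO : IsOpen O) (hder : ∀ x ∈ O, HasFDerivAt Φ (Φ' x) x)
    (hcont : ContinuousOn Φ' O) {x : Euc n} (hx : x ∈ O) :
    HasStrictFDerivAt Φ (Φ' x) x := by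
  apply hasStrictFDerivAt_of_hasFDerivAt_of_continuousAt
  · exact (hO.eventually_mem hx).mono fun y hy => hder y hy
  · exact hcont.continuousAt (hO.mem_nhds hx)

lemma tanCone_good (hO : IsOpen O) (hXO : X ∩ O = {x | x ∈ O ∧ Φ x = 0})
    (hder : ∀ x ∈ O, HasFDerivAt Φ (Φ' x) x) (hcont : ContinuousOn Φ' O)
    {x : Euc n} (hxX : x ∈ X) (hxU : x ∈ good O Φ') :
    tanCone X x = {w | Φ' x w = 0} :=
  tanCone_eq_ker hO hXO hxX hxU.1 (strict_of_good hO hder hcont hxU.1)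
    (surj_of_isUnit_Gm hxU.2)

lemma projSet_good (hO : IsOpen O) (hXO : X ∩ O = {x | x ∈ O ∧ Φ x = 0})
    (hder : ∀ x ∈ O, HasFDerivAt Φ (Φ' x) x) (hcont : ContinuousOn Φ' O)
    {x : Euc n} (hxX : x ∈ X) (hxU : x ∈ good O Φ') (v : Euc n) :
    projSet (tanCone X x) v = {Pm (Φ' x) v} := by
  rw [tanCone_good hO hXO hder hcont hxX hxU]
  exact projSet_ker_eq hxU.2 v

variable {f : Euc n → Euc m}

lemma fNormal2_good (hf : ContDiff ℝ 1 f) (hO : IsOpen O)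
    (hXO : X ∩ O = {x | x ∈ O ∧ Φ x = 0})
    (hder : ∀ x ∈ O, HasFDerivAt Φ (Φ' x) x) (hcont : ContinuousOn Φ' O)
    {x : Euc n} (hxX : x ∈ X) (hxU : x ∈ good O Φ') {v : Euc n} {u : Euc m}
    (h : (v, u) ∈ fNormal2 (gph (restr (fun x => {f x}) X)) (x, f x)) :
    Pm (Φ' x) (v + adjoint (fderiv ℝ f x) u) = 0 := by
  rw [Pm_eq_zero_iff hxU.2]
  exact fNormal2_graph_perp (hf.differentiable one_ne_zero x).hasFDerivAt
    (fun w hw => by rw [tanCone_good hO hXO hder hcont hxX hxU]; exact hw) h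

lemma lNormal2_good (hf : ContDiff ℝ 1 f) (hO : IsOpen O)
    (hXO : X ∩ O = {x | x ∈ O ∧ Φ x = 0})
    (hder : ∀ x ∈ O, HasFDerivAt Φ (Φ' x) x) (hcont : ContinuousOn Φ' O)
    {x : Euc n} (hxX : x ∈ X) (hxU : x ∈ good O Φ') {v : Euc n} {u : Euc m}
    (h : (v, u) ∈ lNormal2 (gph (restr (fun x => {f x}) X)) (x, f x)) :
    Pm (Φ' x) (v + adjoint (fderiv ℝ f x) u) = 0 := by
  obtain ⟨hzD, zk, vk, hfk, hzk, hvk⟩ := h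
  have hxk : Tendsto (fun k => (zk k).1) atTop (𝓝 x) := (continuous_fst.tendsto _).comp hzk
  have hevU : ∀ᶠ k in atTop, (zk k).1 ∈ good O Φ' :=
    hxk.eventually ((good_open hO hcont).eventually_mem hxU)
  have hev0 : ∀ᶠ k in atTop,
      Pm (Φ' ((zk k).1)) ((vk k).1 + adjoint (fderiv ℝ f ((zk k).1)) (vk k).2) = 0 := by
    refine hevU.mono fun k hk => ?_
    obtain ⟨h2, h1X⟩ := mem_gph_restr.mp (hfk k).1
    have hzeq : zk k = ((zk k).1, f ((zk k).1)) := by rw [← h2]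
    have hfk' : ((vk k).1, (vk k).2) ∈ fNormal2 (gph (restr (fun x => {f x}) X))
        ((zk k).1, f ((zk k).1)) := by
      rw [Prod.mk.eta, ← hzeq]; exact hfk k
    exact fNormal2_good hf hO hXO hder hcont h1X hk hfk'
  -- pass to the limit
  have hPcont : ContinuousOn (fun x => Pm (Φ' x)) (good O Φ') :=
    continuousOn_Pm (hcont.mono Set.inter_subset_left) (fun x hx => hx.2)
  have hxkU : Tendsto (fun k => (zk k).1) atTop (𝓝[good O Φ'] x) :=
    tendsto_nhdsWithin_iff.mpr ⟨hxk, hevU⟩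
  have hPseq : Tendsto (fun k => Pm (Φ' ((zk k).1))) atTop (𝓝 (Pm (Φ' x))) :=
    ((hPcont x hxU).tendsto).comp hxkU
  have hAcont : Continuous fun x : Euc n => adjoint (fderiv ℝ f x) :=
    ((ContinuousLinearMap.adjoint :
      (Euc n →L[ℝ] Euc m) ≃ₗᵢ⋆[ℝ] (Euc m →L[ℝ] Euc n)).continuous).comp
      (hf.continuous_fderiv one_ne_zero)
  have hv1 : Tendsto (fun k => (vk k).1) atTop (𝓝 v) := (continuous_fst.tendsto _).comp hvk
  have hv2 : Tendsto (fun k => (vk k).2) atTop (𝓝 u) := (continuous_snd.tendsto _).comp hvk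
  have harg : Tendsto (fun k => (vk k).1 + adjoint (fderiv ℝ f ((zk k).1)) (vk k).2) atTop
      (𝓝 (v + adjoint (fderiv ℝ f x) u)) :=
    hv1.add (tendsto_clm_apply ((hAcont.tendsto _).comp hxk) hv2)
  have hfull : Tendsto
      (fun k => Pm (Φ' ((zk k).1)) ((vk k).1 + adjoint (fderiv ℝ f ((zk k).1)) (vk k).2))
      atTop (𝓝 (Pm (Φ' x) (v + adjoint (fderiv ℝ f x) u))) := tendsto_clm_apply hPseq harg
  have hzero : Tendsto (fun _ : ℕ => (0 : Euc n)) atTop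
      (𝓝 (Pm (Φ' x) (v + adjoint (fderiv ℝ f x) u))) := (tendsto_congr' hev0).mp hfull
  exact (tendsto_nhds_unique hzero tendsto_const_nhds)

end Stmt9Aux

open Stmt9Aux ContinuousLinearMap in
/-- Fixed-point expression for the projectional coderivative of
a `C¹` single-valued map relative to a smooth manifold:
`D*_X F(xb)(y) = { proj_{T_X(xb)}(∇F(xb)* y) }`. -/
theorem stmt9 {n m : ℕ} (X : Set (Euc n)) (xb : Euc n)
    (hX : SmoothManifoldAround X xb) (hxb : xb ∈ X)
    (f : Euc n → Euc m) (hf : ContDiff ℝ 1 f) (y : Euc m) :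
    projCoderiv (fun x => {f x}) X xb (f xb) y =
      projSet (tanCone X xb) (ContinuousLinearMap.adjoint (fderiv ℝ f xb) y) := by
  obtain ⟨c, O, Φ, Φ', hO, hxbO, hXO, hder, hcont, hsurj⟩ := hX
  have hxbU : xb ∈ good O Φ' := ⟨hxbO, isUnit_Gm hsurj⟩
  have hproj_xb := projSet_good hO hXO hder hcont hxb hxbU (adjoint (fderiv ℝ f xb) y)
  have hAcont : Continuous fun x : Euc n => adjoint (fderiv ℝ f x) :=
    ((ContinuousLinearMap.adjoint :
      (Euc n →L[ℝ] Euc m) ≃ₗᵢ⋆[ℝ] (Euc m →L[ℝ] Euc n)).continuous).comp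
      (hf.continuous_fderiv one_ne_zero)
  ext t
  constructor
  · rintro ⟨zk, qk, hzkD, hqk, hzk, hqkt⟩
    have hxk : Tendsto (fun k => (zk k).1) atTop (𝓝 xb) := (continuous_fst.tendsto _).comp hzk
    choose vk hvlN hvproj using hqk
    have hevU : ∀ᶠ k in atTop, (zk k).1 ∈ good O Φ' :=
      hxk.eventually ((good_open hO hcont).eventually_mem hxbU)
    have hev : ∀ᶠ k in atTop,
        (qk k).1 = Pm (Φ' ((zk k).1)) (adjoint (fderiv ℝ f ((zk k).1)) (-(qk k).2)) := by
      refine hevU.mono fun k hk => ?_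
      obtain ⟨h2, h1X⟩ := mem_gph_restr.mp (hzkD k)
      have hzeq : zk k = ((zk k).1, f ((zk k).1)) := by rw [← h2]
      have hlN : ((vk k), (qk k).2) ∈ lNormal2 (gph (restr (fun x => {f x}) X))
          ((zk k).1, f ((zk k).1)) := by rw [← hzeq]; exact hvlN k
      have hperp := lNormal2_good hf hO hXO hder hcont h1X hk hlN
      have hpr : (qk k).1 ∈ projSet (tanCone X ((zk k).1)) (vk k) := hvproj k
      rw [projSet_good hO hXO hder hcont h1X hk (vk k)] at hpr
      rw [Set.mem_singleton_iff] at hpr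
      rw [hpr]
      rw [map_add] at hperp
      rw [map_neg, map_neg]
      exact eq_neg_of_add_eq_zero_left hperp
    have hq1t : Tendsto (fun k => (qk k).1) atTop (𝓝 t) := (continuous_fst.tendsto _).comp hqkt
    have hq2 : Tendsto (fun k => -(qk k).2) atTop (𝓝 y) := by
      have h3 : Tendsto (fun k => (qk k).2) atTop (𝓝 (-y)) :=
        (continuous_snd.tendsto _).comp hqkt
      have h4 := h3.neg
      rwa [neg_neg] at h4
    have hPcont : ContinuousOn (fun x => Pm (Φ' x)) (good O Φ') :=
      continuousOn_Pm (hcont.mono Set.inter_subset_left) (fun x hx => hx.2)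
    have hxkU : Tendsto (fun k => (zk k).1) atTop (𝓝[good O Φ'] xb) :=
      tendsto_nhdsWithin_iff.mpr ⟨hxk, hevU⟩
    have hPseq : Tendsto (fun k => Pm (Φ' ((zk k).1))) atTop (𝓝 (Pm (Φ' xb))) :=
      ((hPcont xb hxbU).tendsto).comp hxkU
    have hR : Tendsto (fun k => Pm (Φ' ((zk k).1)) (adjoint (fderiv ℝ f ((zk k).1)) (-(qk k).2)))
        atTop (𝓝 (Pm (Φ' xb) (adjoint (fderiv ℝ f xb) y))) :=
      tendsto_clm_apply hPseq (tendsto_clm_apply ((hAcont.tendsto _).comp hxk) hq2)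
    have hq1t' := (tendsto_congr' hev).mp hq1t
    have hteq : t = Pm (Φ' xb) (adjoint (fderiv ℝ f xb) y) := tendsto_nhds_unique hq1t' hR
    rw [hproj_xb, Set.mem_singleton_iff]
    exact hteq
  · intro ht
    rw [hproj_xb, Set.mem_singleton_iff] at ht
    refine ⟨fun _ => (xb, f xb), fun _ => (t, -y), fun _ => mem_gph_restr.mpr ⟨rfl, hxb⟩,
      fun _ => ?_, tendsto_const_nhds, tendsto_const_nhds⟩
    refine ⟨adjoint (fderiv ℝ f xb) y, ?_, ?_⟩
    · exact ⟨mem_gph_restr.mpr ⟨rfl, hxb⟩, fun _ => (xb, f xb),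
        fun _ => (adjoint (fderiv ℝ f xb) y, -y),
        fun _ => fNormal2_graph_mem hxb (hf.differentiable one_ne_zero xb).hasFDerivAt y,
        tendsto_const_nhds, tendsto_const_nhds⟩
    · rw [hproj_xb, Set.mem_singleton_iff]
      exact ht
end
end

section
/- Let S : ℝⁿ ⇉ ℝᵐ, X a smooth manifold around x̄ ∈ X, ū ∈ S(x̄), gph S locally closed at (x̄,ū). If S has the Lipschitz-like property relative to X at x̄ for ū with constant κ ≥ 0, then for all (x,u) ∈ gph S|_X sufficiently close to (x̄,ū) and all u*, every x* ∈ D̂*S|_X(x|u)(u*) satisfies ‖proj_{T_X(x)}(x*)‖ ≤ κ‖u*‖. -/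
open Filter Topology Set Metric
open scoped ENNReal NNReal

noncomputable section

variable {E F : Type*}

lemma smul_mem_tanCone {E : Type*} [NormedAddCommGroup E] [NormedSpace ℝ E]
    {C : Set E} {x w : E} {l : ℝ} (hl : 0 < l) (hw : w ∈ tanCone C x) :
    l • w ∈ tanCone C x := by
  obtain ⟨tk, wk, hpos, h0, hlim, hmem⟩ := hw
  refine ⟨fun k => tk k / l, fun k => l • wk k, fun k => div_pos (hpos k) hl,
    ?_, hlim.const_smul l, fun k => ?_⟩
  · simpa using h0.div_const l
  · rw [smul_smul, div_mul_cancel₀ _ hl.ne']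
    exact hmem k

set_option maxHeartbeats 1600000 in
/-- Necessity: if `S` has the Lipschitz-like property relative
to the smooth manifold `X` at `xb` for `ub` with constant `κ`, then for all
`(x,u) ∈ gph S|_X` near `(xb,ub)`, every Fréchet coderivative element satisfies
`‖proj_{T_X(x)}(x*)‖ ≤ κ‖u*‖`. -/
theorem stmt10 {n m : ℕ} (S : Euc n → Set (Euc m)) (X : Set (Euc n))
    (xb : Euc n) (ub : Euc m) (hX : SmoothManifoldAround X xb)
    (hxb : xb ∈ X) (hub : ub ∈ S xb)
    (hcl : LocallyClosedAt (gph S) (xb, ub))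
    (κ : ℝ) (hκ : 0 ≤ κ) (hlip : LipschitzLikeRel S X xb ub κ) :
    ∃ δ > 0, ∀ z ∈ gph (restr S X), dist z (xb, ub) < δ →
      ∀ (us : Euc m) (xs : Euc n), xs ∈ fCoderiv (restr S X) z.1 z.2 us →
        ∀ t ∈ projSet (tanCone X z.1) xs, ‖t‖ ≤ κ * ‖us‖ := by
  obtain ⟨-, V, hV, W, hW, hL⟩ := hlip
  obtain ⟨rV, hrV, hVb⟩ := Metric.mem_nhds_iff.mp hV
  obtain ⟨rW, hrW, hWb⟩ := Metric.mem_nhds_iff.mp hW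
  set r : ℝ := min rV rW with hrdef
  have hr : 0 < r := lt_min hrV hrW
  refine ⟨r / 2, by positivity, ?_⟩
  rintro ⟨x, u⟩ hz hdist us xs hxs t ht
  obtain ⟨htK, htproj⟩ := ht
  simp only [gph, restr, Set.mem_setOf_eq] at hz
  obtain ⟨hu, hxX⟩ := hz
  rw [Prod.dist_eq] at hdist
  have hdx : dist x xb < r / 2 := lt_of_le_of_lt (le_max_left _ _) hdist
  have hdu : dist u ub < r / 2 := lt_of_le_of_lt (le_max_right _ _) hdist
  have hxV : x ∈ V := hVb (by
    simp only [Metric.mem_ball]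
    exact hdx.trans (by linarith [min_le_left rV rW]))
  have huW : u ∈ W := hWb (by
    simp only [Metric.mem_ball]
    exact hdu.trans (by linarith [min_le_right rV rW]))
  by_cases ht0 : t = 0
  · simp only [ht0, norm_zero]
    positivity
  have htpos : 0 < ‖t‖ := norm_pos_iff.mpr ht0
  obtain ⟨-, hF⟩ := hxs
  -- Step A : ⟪xs, t⟫ ≤ κ ‖us‖ ‖t‖
  have keyA : (inner ℝ xs t : ℝ) ≤ κ * ‖us‖ * ‖t‖ := by
    refine le_of_forall_pos_le_add (fun ε hε => ?_)
    set M : ℝ := max 1 κ with hMdef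
    have hM0 : (0:ℝ) < M := lt_of_lt_of_le one_pos (le_max_left _ _)
    set ε₀ : ℝ := ε / (M * (‖t‖ + 1)) with hε₀def
    have hε₀ : 0 < ε₀ := by positivity
    obtain ⟨δ', hδ', hFδ⟩ := hF ε₀ hε₀
    obtain ⟨tk, wk, htk, htk0, hwk, hmemk⟩ := htK
    have ha : Tendsto (fun k => tk k * ‖wk k‖) atTop (𝓝 0) := by
      have := htk0.mul hwk.norm
      simpa using this
    set C : ℝ := κ * ‖us‖ + ε₀ * M with hCdef
    have hbd : 0 < min (δ' / M) (r / 2) := lt_min (by positivity) (by positivity)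
    have hev1 : ∀ᶠ k in atTop, tk k * ‖wk k‖ < min (δ' / M) (r / 2) :=
      ha.eventually_lt_const hbd
    have hev : ∀ᶠ k in atTop, (inner ℝ xs (wk k) : ℝ) ≤ C * ‖wk k‖ := by
      filter_upwards [hev1] with k hk
      set a : ℝ := tk k * ‖wk k‖ with hadef
      have ha0 : 0 ≤ a := mul_nonneg (htk k).le (norm_nonneg _)
      have hk1 : a < δ' / M := hk.trans_le (min_le_left _ _)
      have hk2 : a < r / 2 := hk.trans_le (min_le_right _ _)
      set xk : Euc n := x + tk k • wk k with hxkdef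
      have hxkX : xk ∈ X := hmemk k
      have hna : ‖xk - x‖ = a := by
        rw [hxkdef, add_sub_cancel_left, norm_smul, Real.norm_eq_abs,
          abs_of_pos (htk k)]
      have hxkV : xk ∈ V := by
        refine hVb (Metric.mem_ball.mpr ?_)
        have h1 : dist xk xb ≤ dist xk x + dist x xb := dist_triangle _ _ _
        have h2 : dist xk x = a := by rw [dist_eq_norm, hna]
        have h3 : r ≤ rV := min_le_left rV rW
        rw [h2] at h1
        linarith
      obtain ⟨uk, huk, hlk⟩ := hL xk ⟨hxkX, hxkV⟩ x ⟨hxX, hxV⟩ u ⟨hu, huW⟩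
      have hxxk : ‖x - xk‖ = a := by rw [norm_sub_rev, hna]
      have hukb : ‖uk - u‖ ≤ κ * a := by
        rw [norm_sub_rev]
        calc ‖u - uk‖ ≤ κ * ‖x - xk‖ := hlk
        _ = κ * a := by rw [hxxk]
      have hzmem : ((xk, uk) : Euc n × Euc m) ∈ gph (restr S X) := ⟨huk, hxkX⟩
      have hnorm : ‖((xk, uk) : Euc n × Euc m) - (x, u)‖ ≤ M * a := by
        rw [Prod.norm_def]
        refine max_le ?_ ?_
        · show ‖xk - x‖ ≤ M * a
          rw [hna]
          nlinarith [le_max_left (1:ℝ) κ]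
        · show ‖uk - u‖ ≤ M * a
          exact hukb.trans (mul_le_mul_of_nonneg_right (le_max_right 1 κ) ha0)
      have hnear : ‖((xk, uk) : Euc n × Euc m) - (x, u)‖ < δ' := by
        have hMa : M * a < δ' := by
          have := (lt_div_iff₀ hM0).mp hk1
          linarith
        exact hnorm.trans_lt hMa
      have hineq := hFδ (xk, uk) hzmem hnear
      simp only at hineq
      have e1 : (inner ℝ xs (xk - x) : ℝ) = tk k * inner ℝ xs (wk k) := by
        rw [hxkdef, add_sub_cancel_left, real_inner_smul_right]
      have e2 : (inner ℝ (-us) (uk - u) : ℝ) = -(inner ℝ us (uk - u) : ℝ) := by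
        rw [inner_neg_left]
      have e3 : (inner ℝ us (uk - u) : ℝ) ≤ ‖us‖ * (κ * a) := by
        have h1 : (inner ℝ us (uk - u) : ℝ) ≤ ‖us‖ * ‖uk - u‖ := real_inner_le_norm _ _
        have h2 : ‖us‖ * ‖uk - u‖ ≤ ‖us‖ * (κ * a) :=
          mul_le_mul_of_nonneg_left hukb (norm_nonneg _)
        linarith
      have hRHS : ε₀ * ‖((xk, uk) : Euc n × Euc m) - (x, u)‖ ≤ ε₀ * (M * a) :=
        mul_le_mul_of_nonneg_left hnorm hε₀.le
      have hfin : tk k * (inner ℝ xs (wk k) : ℝ) ≤ tk k * (C * ‖wk k‖) := by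
        have : tk k * (inner ℝ xs (wk k) : ℝ) ≤ ‖us‖ * (κ * a) + ε₀ * (M * a) := by
          have h5 := hineq
          rw [e1, e2] at h5
          linarith [e3, hRHS, h5]
        calc tk k * (inner ℝ xs (wk k) : ℝ) ≤ ‖us‖ * (κ * a) + ε₀ * (M * a) := this
        _ = tk k * (C * ‖wk k‖) := by rw [hadef, hCdef]; ring
      exact le_of_mul_le_mul_left hfin (htk k)
    have h1 : Tendsto (fun k => (inner ℝ xs (wk k) : ℝ)) atTop (𝓝 (inner ℝ xs t)) :=
      tendsto_const_nhds.inner hwk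
    have h2 : Tendsto (fun k => C * ‖wk k‖) atTop (𝓝 (C * ‖t‖)) :=
      hwk.norm.const_mul C
    have hle : (inner ℝ xs t : ℝ) ≤ C * ‖t‖ := le_of_tendsto_of_tendsto h1 h2 hev
    have htail : ε₀ * M * ‖t‖ ≤ ε := by
      have hc : ε₀ * (M * (‖t‖ + 1)) = ε := div_mul_cancel₀ _ (by positivity)
      nlinarith [hε₀]
    calc (inner ℝ xs t : ℝ) ≤ C * ‖t‖ := hle
    _ = κ * ‖us‖ * ‖t‖ + ε₀ * M * ‖t‖ := by rw [hCdef]; ring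
    _ ≤ κ * ‖us‖ * ‖t‖ + ε := by linarith
  -- Step B : ‖t‖² ≤ ⟪xs, t⟫
  have keyB : ‖t‖ ^ 2 ≤ (inner ℝ xs t : ℝ) := by
    have hmin : ∀ y ∈ tanCone X x, ‖xs - t‖ ≤ ‖xs - y‖ := by
      intro y hy
      rw [htproj, ← dist_eq_norm]
      exact Metric.infDist_le_dist_of_mem hy
    have hlam : ∀ l : ℝ, 0 < l → l < 1 → (1 + l) * ‖t‖ ^ 2 ≤ 2 * (inner ℝ xs t : ℝ) := by
      intro l hl0 hl1
      have h1 : ‖xs - t‖ ≤ ‖xs - l • t‖ := hmin _ (smul_mem_tanCone hl0 htK)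
      have h2 : ‖xs - t‖ ^ 2 ≤ ‖xs - l • t‖ ^ 2 :=
        pow_le_pow_left₀ (norm_nonneg _) h1 2
      rw [norm_sub_sq_real, norm_sub_sq_real, real_inner_smul_right, norm_smul,
        Real.norm_eq_abs, abs_of_pos hl0] at h2
      nlinarith [sq_nonneg ‖t‖]
    by_contra hcon
    push_neg at hcon
    set I : ℝ := inner ℝ xs t with hIdef
    set N : ℝ := ‖t‖ ^ 2 with hNdef
    have hN : 0 < N := by positivity
    have h34 : (3 / 2 : ℝ) * N ≤ 2 * I := by
      have := hlam (1/2) (by norm_num) (by norm_num)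
      linarith [this]
    have hI0 : 0 < I := by nlinarith
    have hIN1 : I / N < 1 := (div_lt_one hN).mpr hcon
    have hIN0 : 0 < I / N := div_pos hI0 hN
    have := hlam (I / N) hIN0 hIN1
    have hexp : (1 + I / N) * N = N + I := by field_simp
    rw [hexp] at this
    linarith
  nlinarith [keyA, keyB, htpos]
end
end

section
/- Let X be a smooth manifold around x̄ ∈ X and S : ℝⁿ ⇉ ℝᵐ with gph S locally closed at (x̄,ū), X ⊆ dom S. Then the set-valued mapping (x,u) ↦ proj_{T_X(x)×ℝᵐ} N_{gph S|_X}(x,u) is outer semicontinuous relative to gph S|_X at (x̄,ū), and consequently the projectional coderivative satisfies D*_X S(x̄|ū) = proj_{T_X(x̄)} D*S|_X(x̄|ū) (i.e. the outer limit in the definition is attained at the reference point). -/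
open Filter Topology Set Metric
open scoped ENNReal NNReal

noncomputable section

variable {E F : Type*}

/-! ### Auxiliary lemmas -/

section AuxGeneral
variable [NormedAddCommGroup E] [InnerProductSpace ℝ E]
  [NormedAddCommGroup F] [InnerProductSpace ℝ F]

lemma fNormal2_add {D : Set (E × F)} {z p q : E × F}
    (hp : p ∈ fNormal2 D z) (hq : q ∈ fNormal2 D z) : p + q ∈ fNormal2 D z := by
  refine ⟨hp.1, fun ε hε => ?_⟩
  obtain ⟨δ1, hδ1, h1⟩ := hp.2 (ε / 2) (by linarith)
  obtain ⟨δ2, hδ2, h2⟩ := hq.2 (ε / 2) (by linarith)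
  refine ⟨min δ1 δ2, lt_min hδ1 hδ2, fun z' hz' hlt => ?_⟩
  have e1 := h1 z' hz' (hlt.trans_le (min_le_left _ _))
  have e2 := h2 z' hz' (hlt.trans_le (min_le_right _ _))
  simp only [Prod.fst_add, Prod.snd_add, inner_add_left]
  linarith

lemma lNormal2_osc {D : Set (E × F)} {zb : E × F} {zk pk : ℕ → E × F} {p : E × F}
    (hzb : zb ∈ D) (hmem : ∀ k, pk k ∈ lNormal2 D (zk k))
    (hz : Tendsto zk atTop (𝓝 zb)) (hp : Tendsto pk atTop (𝓝 p)) :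
    p ∈ lNormal2 D zb := by
  refine ⟨hzb, ?_⟩
  have h : ∀ k : ℕ, ∃ zv : (E × F) × (E × F), zv.2 ∈ fNormal2 D zv.1 ∧
      dist zv.1 (zk k) < 1 / (k + 1) ∧ dist zv.2 (pk k) < 1 / (k + 1) := by
    intro k
    obtain ⟨_, zi, vi, hf, hzt, hvt⟩ := hmem k
    have hpos : (0:ℝ) < 1 / (k + 1) := by positivity
    obtain ⟨N1, hN1⟩ := (Metric.tendsto_atTop.1 hzt) _ hpos
    obtain ⟨N2, hN2⟩ := (Metric.tendsto_atTop.1 hvt) _ hpos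
    exact ⟨(zi (max N1 N2), vi (max N1 N2)), hf _,
      hN1 _ (le_max_left _ _), hN2 _ (le_max_right _ _)⟩
  choose zv hf hd1 hd2 using h
  have hone : Tendsto (fun k : ℕ => 1 / ((k : ℝ) + 1)) atTop (𝓝 0) :=
    tendsto_one_div_add_atTop_nhds_zero_nat
  refine ⟨fun k => (zv k).1, fun k => (zv k).2, hf, ?_, ?_⟩
  · rw [tendsto_iff_dist_tendsto_zero]
    refine squeeze_zero (g := fun k : ℕ => 1 / ((k:ℝ)+1) + dist (zk k) zb) (fun k => dist_nonneg)
      (fun k => (dist_triangle _ (zk k) zb).trans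
        (add_le_add (le_of_lt (hd1 k)) le_rfl)) ?_
    simpa using hone.add (tendsto_iff_dist_tendsto_zero.1 hz)
  · rw [tendsto_iff_dist_tendsto_zero]
    refine squeeze_zero (g := fun k : ℕ => 1 / ((k:ℝ)+1) + dist (pk k) p) (fun k => dist_nonneg)
      (fun k => (dist_triangle _ (pk k) p).trans
        (add_le_add (le_of_lt (hd2 k)) le_rfl)) ?_
    simpa using hone.add (tendsto_iff_dist_tendsto_zero.1 hp)

end AuxGeneral

section AuxEuc
variable {n c : ℕ}

lemma projSet_sub_mem_orthogonal (K : Submodule ℝ (Euc n)) {v p : Euc n}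
    (hp : p ∈ projSet (K : Set (Euc n)) v) : v - p ∈ Kᗮ := by
  have hmem : p ∈ K := hp.1
  have hinf : ‖v - p‖ = ⨅ w : (K : Set (Euc n)), ‖v - w‖ := by
    rw [hp.2, Metric.infDist_eq_iInf]
    simp only [dist_eq_norm]
  have h := (Submodule.norm_eq_iInf_iff_real_inner_eq_zero K hmem).1 hinf
  rw [Submodule.mem_orthogonal]
  intro u hu
  rw [real_inner_comm]
  exact h u hu

lemma orthogonal_ker_le_range_adjoint (A : Euc n →L[ℝ] Euc c) :
    (LinearMap.ker (A : Euc n →ₗ[ℝ] Euc c))ᗮ ≤ LinearMap.range (ContinuousLinearMap.adjoint A : Euc c →ₗ[ℝ] Euc n) := by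
  have h1 : (LinearMap.range (ContinuousLinearMap.adjoint A : Euc c →ₗ[ℝ] Euc n))ᗮ = LinearMap.ker (A : Euc n →ₗ[ℝ] Euc c) := by
    ext x
    simp only [Submodule.mem_orthogonal, LinearMap.mem_range, LinearMap.mem_ker,
      forall_exists_index, ContinuousLinearMap.coe_coe]
    constructor
    · intro h
      have h2 : ∀ lam, (inner ℝ lam (A x) : ℝ) = 0 := by
        intro lam
        have := h (ContinuousLinearMap.adjoint A lam) lam rfl
        rwa [ContinuousLinearMap.adjoint_inner_left] at this
      have := h2 (A x)
      exact inner_self_eq_zero.mp this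
    · intro hAx u lam hlam
      subst hlam
      rw [ContinuousLinearMap.adjoint_inner_left, hAx, inner_zero_right]
  rw [← h1, Submodule.orthogonal_orthogonal]

lemma isUnit_comp_adjoint_of_surj (A : Euc n →L[ℝ] Euc c)
    (h : Function.Surjective A) :
    IsUnit (A ∘L ContinuousLinearMap.adjoint A) := by
  set B := A ∘L ContinuousLinearMap.adjoint A with hB
  have hker : ∀ u, B u = 0 → u = 0 := by
    intro u hu
    have h1 : (inner ℝ (ContinuousLinearMap.adjoint A u) (ContinuousLinearMap.adjoint A u) : ℝ) = 0 := by
      have h2 : (inner ℝ (B u) u : ℝ) = 0 := by rw [hu, inner_zero_left]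
      rw [hB, ContinuousLinearMap.comp_apply] at h2
      rw [ContinuousLinearMap.adjoint_inner_left, real_inner_comm]
      exact h2
    have hA0 : ContinuousLinearMap.adjoint A u = 0 := inner_self_eq_zero.mp h1
    have h3 : (inner ℝ u u : ℝ) = 0 := by
      obtain ⟨y0, hy0⟩ := h u
      calc (inner ℝ u u : ℝ) = inner ℝ u (A y0) := by rw [hy0]
        _ = inner ℝ (ContinuousLinearMap.adjoint A u) y0 :=
            (ContinuousLinearMap.adjoint_inner_left A y0 u).symm
        _ = 0 := by rw [hA0, inner_zero_left]
    exact inner_self_eq_zero.mp h3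
  have hinj : Function.Injective B := by
    intro a b hab
    have h4 : B (a - b) = 0 := by rw [map_sub, hab, sub_self]
    exact sub_eq_zero.mp (hker _ h4)
  have hsurjB : Function.Surjective B :=
    (LinearMap.injective_iff_surjective (f := (B : Euc c →ₗ[ℝ] Euc c))).mp hinj
  let e := (LinearEquiv.ofBijective (B : Euc c →ₗ[ℝ] Euc c)
    ⟨hinj, hsurjB⟩).toContinuousLinearEquiv
  exact ⟨e.toUnit, by ext x; rfl⟩

lemma surj_of_isUnit_comp_adjoint (A : Euc n →L[ℝ] Euc c)
    (h : IsUnit (A ∘L ContinuousLinearMap.adjoint A)) : Function.Surjective A := by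
  obtain ⟨u, hu⟩ := h
  intro y
  refine ⟨ContinuousLinearMap.adjoint A ((↑u⁻¹ : Euc c →L[ℝ] Euc c) y), ?_⟩
  have h0 : (↑u : Euc c →L[ℝ] Euc c) * (↑u⁻¹ : Euc c →L[ℝ] Euc c) = 1 := u.mul_inv
  have h1 : (↑u : Euc c →L[ℝ] Euc c) ((↑u⁻¹ : Euc c →L[ℝ] Euc c) y) = y := by
    calc (↑u : Euc c →L[ℝ] Euc c) ((↑u⁻¹ : Euc c →L[ℝ] Euc c) y)
        = ((↑u * ↑u⁻¹ : Euc c →L[ℝ] Euc c)) y := rfl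
      _ = (1 : Euc c →L[ℝ] Euc c) y := by rw [h0]
      _ = y := rfl
  calc A (ContinuousLinearMap.adjoint A ((↑u⁻¹ : Euc c →L[ℝ] Euc c) y))
      = (A ∘L ContinuousLinearMap.adjoint A) ((↑u⁻¹ : Euc c →L[ℝ] Euc c) y) := rfl
    _ = y := by rw [← hu]; exact h1

end AuxEuc

section Chart
variable {n m c : ℕ} {S : Euc n → Set (Euc m)} {X O : Set (Euc n)}
  {Φ : Euc n → Euc c} {Φ' : Euc n → Euc n →L[ℝ] Euc c}

lemma tanCone_subset_ker_s13 (hO : IsOpen O) (hXO : X ∩ O = {x | x ∈ O ∧ Φ x = 0})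
    (hd : ∀ x ∈ O, HasFDerivAt Φ (Φ' x) x) {x : Euc n} (hx : x ∈ X ∩ O) :
    tanCone X x ⊆ (LinearMap.ker (Φ' x : Euc n →ₗ[ℝ] Euc c) : Set (Euc n)) := by
  rintro w ⟨t, w', ht, ht0, hw', hmemX⟩
  have hΦx : Φ x = 0 := (hXO ▸ hx).2
  have hyk : Tendsto (fun k => x + t k • w' k) atTop (𝓝 x) := by
    have h1 : Tendsto (fun k => t k • w' k) atTop (𝓝 ((0:ℝ) • w)) := ht0.smul hw'
    simpa using tendsto_const_nhds.add h1
  have key : ∀ ε : ℝ, 0 < ε → ‖Φ' x w‖ ≤ ε * ‖w‖ := by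
    intro ε hε
    have hev1 := hyk.eventually ((hd x hx.2).isLittleO.def hε)
    have hev2 := hyk.eventually (hO.eventually_mem hx.2)
    have hev : ∀ᶠ k in atTop, ‖Φ' x (w' k)‖ ≤ ε * ‖w' k‖ := by
      filter_upwards [hev1, hev2] with k h1 h2
      have hxk : x + t k • w' k ∈ X ∩ O := ⟨hmemX k, h2⟩
      have hΦk : Φ (x + t k • w' k) = 0 := (hXO ▸ hxk).2
      rw [hΦk, hΦx, add_sub_cancel_left] at h1
      have h1' : ‖Φ' x (t k • w' k)‖ ≤ ε * ‖t k • w' k‖ := by simpa using h1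
      rw [map_smul, norm_smul, norm_smul, Real.norm_eq_abs,
        abs_of_pos (ht k)] at h1'
      nlinarith [ht k]
    have l1 : Tendsto (fun k => ‖Φ' x (w' k)‖) atTop (𝓝 ‖Φ' x w‖) :=
      (((Φ' x).continuous.tendsto w).comp hw').norm
    have l2 : Tendsto (fun k => ε * ‖w' k‖) atTop (𝓝 (ε * ‖w‖)) :=
      hw'.norm.const_mul ε
    exact le_of_tendsto_of_tendsto l1 l2 hev
  have : ‖Φ' x w‖ ≤ 0 := by
    by_contra h
    push_neg at h
    have h1 := key (‖Φ' x w‖ / (2 * (‖w‖ + 1))) (by positivity)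
    have hw0 : (0:ℝ) ≤ ‖w‖ := norm_nonneg w
    rw [div_mul_eq_mul_div, le_div_iff₀ (by positivity)] at h1
    nlinarith
  simpa [SetLike.mem_coe, LinearMap.mem_ker] using norm_le_zero_iff.mp this

lemma ker_subset_tanCone_s13 (hO : IsOpen O) (hXO : X ∩ O = {x | x ∈ O ∧ Φ x = 0})
    (hd : ∀ x ∈ O, HasFDerivAt Φ (Φ' x) x) (hcd : ContinuousOn Φ' O)
    {x : Euc n} (hx : x ∈ X ∩ O) (hsurj : Function.Surjective (Φ' x)) :
    (LinearMap.ker (Φ' x : Euc n →ₗ[ℝ] Euc c) : Set (Euc n)) ⊆ tanCone X x := by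
  intro w hw
  have hΦx : Φ x = 0 := (hXO ▸ hx).2
  have hstrict : HasStrictFDerivAt Φ (Φ' x) x := by
    refine hasStrictFDerivAt_of_hasFDerivAt_of_continuousAt ?_ ?_
    · exact Filter.eventually_of_mem (hO.mem_nhds hx.2) hd
    · exact hcd.continuousAt (hO.mem_nhds hx.2)
  have hrange : (Φ' x).range = ⊤ := LinearMap.range_eq_top.mpr hsurj
  set K := (Φ' x).ker
  set g := hstrict.implicitFunction Φ (Φ' x) hrange with hg
  set γ : K → Euc n := fun y => g (Φ x) y with hγdef
  have hγ0 : γ 0 = x := hstrict.implicitFunction_apply_image hrange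
  have hγd : HasStrictFDerivAt γ K.subtypeL 0 := hstrict.to_implicitFunction hrange
  set wK : K := ⟨w, hw⟩ with hwK
  set cseq : ℕ → ℝ := fun k => (k : ℝ) + 1 with hcseq
  have hcpos : ∀ k, 0 < cseq k := fun k => by positivity
  set y : ℕ → Euc n := fun k => γ ((cseq k)⁻¹ • wK) with hy
  have hcinv : Tendsto (fun k => (cseq k)⁻¹) atTop (𝓝 0) := by
    apply tendsto_inv_atTop_zero.comp
    exact tendsto_atTop_add_const_right _ 1 tendsto_natCast_atTop_atTop
  have harg : Tendsto (fun k => (cseq k)⁻¹ • wK) atTop (𝓝 0) := by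
    simpa using hcinv.smul_const wK
  have hyx : Tendsto y atTop (𝓝 x) := by
    rw [hy, ← hγ0]
    exact (hγd.continuousAt.tendsto).comp harg
  -- eventually y k ∈ X
  have hyO : ∀ᶠ k in atTop, y k ∈ O := hyx.eventually (hO.eventually_mem hx.2)
  have hyΦ : ∀ᶠ k in atTop, Φ (y k) = 0 := by
    have hmap := hstrict.map_implicitFunction_eq hrange
    have htend : Tendsto (fun k => ((Φ x), ((cseq k)⁻¹ • wK))) atTop (𝓝 (Φ x, 0)) :=
      tendsto_const_nhds.prodMk_nhds harg
    have := htend.eventually hmap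
    filter_upwards [this] with k hk
    rw [hy]; simp only
    rw [hk, hΦx]
  have hyX : ∀ᶠ k in atTop, y k ∈ X := by
    filter_upwards [hyO, hyΦ] with k h1 h2
    have : y k ∈ X ∩ O := hXO ▸ (⟨h1, h2⟩ : y k ∈ {x | x ∈ O ∧ Φ x = 0})
    exact this.1
  obtain ⟨N, hN⟩ := eventually_atTop.mp hyX
  -- directional derivative limit
  have hclim : Tendsto (fun k => ‖cseq k‖) atTop atTop := by
    refine tendsto_atTop_mono (fun k => ?_) (tendsto_atTop_add_const_right _ 1 tendsto_natCast_atTop_atTop)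
    exact le_abs_self _
  have hlim : Tendsto (fun k => cseq k • (y k - x)) atTop (𝓝 w) := by
    have := (hγd.hasFDerivAt).lim wK hclim
    simp only [zero_add, hγ0] at this
    simpa [hy] using this
  refine ⟨fun k => (cseq (k + N))⁻¹, fun k => cseq (k + N) • (y (k + N) - x),
    fun k => inv_pos.mpr (hcpos _), hcinv.comp (tendsto_add_atTop_nat N),
    hlim.comp (tendsto_add_atTop_nat N), fun k => ?_⟩
  have : x + (cseq (k + N))⁻¹ • cseq (k + N) • (y (k + N) - x) = y (k + N) := by
    rw [smul_smul, inv_mul_cancel₀ (ne_of_gt (hcpos _)), one_smul]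
    abel
  rw [this]
  exact hN _ (Nat.le_add_left N k)

lemma chart_fNormal (hO : IsOpen O) (hXO : X ∩ O = {x | x ∈ O ∧ Φ x = 0})
    (hd : ∀ x ∈ O, HasFDerivAt Φ (Φ' x) x)
    {z : Euc n × Euc m} (hz : z ∈ gph (restr S X)) (hzO : z.1 ∈ O) (lam : Euc c) :
    ((ContinuousLinearMap.adjoint (Φ' z.1)) lam, (0 : Euc m)) ∈ fNormal2 (gph (restr S X)) z := by
  refine ⟨hz, fun ε hε => ?_⟩
  have hxX : z.1 ∈ X := hz.2
  have hΦz : Φ z.1 = 0 := (hXO ▸ Set.mem_inter hxX hzO).2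
  have hε' : 0 < ε / (‖lam‖ + 1) := by positivity
  have hev := ((hd z.1 hzO).isLittleO.def hε').and (hO.eventually_mem hzO)
  obtain ⟨δ, hδ, hball⟩ := Metric.eventually_nhds_iff_ball.mp hev
  refine ⟨δ, hδ, fun z' hz' hlt => ?_⟩
  have hfst : ‖z'.1 - z.1‖ ≤ ‖z' - z‖ := by
    have := norm_fst_le (z' - z)
    simpa using this
  have hb : z'.1 ∈ Metric.ball z.1 δ := by
    rw [Metric.mem_ball, dist_eq_norm]
    exact lt_of_le_of_lt hfst hlt
  obtain ⟨hlo, hO'⟩ := hball _ hb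
  have hΦz' : Φ z'.1 = 0 := (hXO ▸ Set.mem_inter hz'.2 hO').2
  rw [hΦz', hΦz] at hlo
  have hlo' : ‖(Φ' z.1) (z'.1 - z.1)‖ ≤ ε / (‖lam‖ + 1) * ‖z'.1 - z.1‖ := by
    rw [map_sub, norm_sub_rev]
    simpa using hlo
  have hinner : (inner ℝ (ContinuousLinearMap.adjoint (Φ' z.1) lam) (z'.1 - z.1) : ℝ)
      = inner ℝ lam ((Φ' z.1) (z'.1 - z.1)) := ContinuousLinearMap.adjoint_inner_left _ _ _
  have hcs : (inner ℝ lam ((Φ' z.1) (z'.1 - z.1)) : ℝ) ≤ ‖lam‖ * ‖(Φ' z.1) (z'.1 - z.1)‖ :=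
    real_inner_le_norm _ _
  have he'mul : ε / (‖lam‖ + 1) * (‖lam‖ + 1) = ε := div_mul_cancel₀ _ (by positivity)
  have hmain : (inner ℝ (ContinuousLinearMap.adjoint (Φ' z.1) lam) (z'.1 - z.1) : ℝ)
      ≤ ε * ‖z' - z‖ := by
    calc (inner ℝ (ContinuousLinearMap.adjoint (Φ' z.1) lam) (z'.1 - z.1) : ℝ)
        = inner ℝ lam ((Φ' z.1) (z'.1 - z.1)) := hinner
      _ ≤ ‖lam‖ * ‖(Φ' z.1) (z'.1 - z.1)‖ := hcs
      _ ≤ ‖lam‖ * (ε / (‖lam‖ + 1) * ‖z'.1 - z.1‖) :=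
          mul_le_mul_of_nonneg_left hlo' (norm_nonneg lam)
      _ ≤ (‖lam‖ + 1) * (ε / (‖lam‖ + 1) * ‖z'.1 - z.1‖) := by
          have h1 : (0:ℝ) ≤ ε / (‖lam‖ + 1) * ‖z'.1 - z.1‖ := by positivity
          nlinarith
      _ = ε * ‖z'.1 - z.1‖ := by
          rw [← mul_assoc, mul_comm (‖lam‖ + 1) (ε / (‖lam‖ + 1)), he'mul]
      _ ≤ ε * ‖z' - z‖ := mul_le_mul_of_nonneg_left hfst hε.le
  simpa using hmain

end Chart
section Chart2
variable {n m c : ℕ} {S : Euc n → Set (Euc m)} {X O : Set (Euc n)}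
  {Φ : Euc n → Euc c} {Φ' : Euc n → Euc n →L[ℝ] Euc c}

lemma continuous_adjoint_apply (lam : Euc c) :
    Continuous (fun A : Euc n →L[ℝ] Euc c => (ContinuousLinearMap.adjoint A) lam) := by
  have h1 : Continuous (fun A : Euc n →L[ℝ] Euc c => ContinuousLinearMap.adjoint A) :=
    (ContinuousLinearMap.adjoint (𝕜 := ℝ) (E := Euc n) (F := Euc c)).continuous
  have h2 : Continuous (fun B : Euc c →L[ℝ] Euc n => B lam) :=
    isBoundedBilinearMap_apply.continuous.comp (continuous_id.prodMk continuous_const)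
  exact h2.comp h1

lemma proj_mem_lNormal2 (hO : IsOpen O) (hXO : X ∩ O = {x | x ∈ O ∧ Φ x = 0})
    (hd : ∀ x ∈ O, HasFDerivAt Φ (Φ' x) x) (hcd : ContinuousOn Φ' O)
    {z : Euc n × Euc m} (hz : z ∈ gph (restr S X)) (hzO : z.1 ∈ O)
    {v p : Euc n} {w : Euc m}
    (hv : (v, w) ∈ lNormal2 (gph (restr S X)) z)
    (hdiff : v - p ∈ LinearMap.range (ContinuousLinearMap.adjoint (Φ' z.1) : Euc c →ₗ[ℝ] Euc n)) :
    (p, w) ∈ lNormal2 (gph (restr S X)) z := by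
  obtain ⟨lam, hlam⟩ := hdiff
  obtain ⟨hzD, zi, vi, hfi, hzt, hvt⟩ := hv
  have hx : Tendsto (fun i => (zi i).1) atTop (𝓝 z.1) := (continuous_fst.tendsto z).comp hzt
  obtain ⟨N, hN⟩ := eventually_atTop.mp (hx.eventually (hO.eventually_mem hzO))
  have hΦ'c : Tendsto (fun i => Φ' ((zi (i + N)).1)) atTop (𝓝 (Φ' z.1)) :=
    ((hcd.continuousAt (hO.mem_nhds hzO)).tendsto).comp (hx.comp (tendsto_add_atTop_nat N))
  have hadj : Tendsto (fun i => (ContinuousLinearMap.adjoint (Φ' ((zi (i + N)).1))) lam)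
      atTop (𝓝 ((ContinuousLinearMap.adjoint (Φ' z.1)) lam)) :=
    ((continuous_adjoint_apply lam).tendsto _).comp hΦ'c
  refine ⟨hz, fun i => zi (i + N), fun i => vi (i + N) +
      (-(ContinuousLinearMap.adjoint (Φ' ((zi (i + N)).1)) lam), 0), fun i => ?_,
      hzt.comp (tendsto_add_atTop_nat N), ?_⟩
  · refine fNormal2_add (hfi _) ?_
    have hch := chart_fNormal hO hXO hd (hfi (i + N)).1 (hN _ (Nat.le_add_left N i)) (-lam)
    simpa [map_neg] using hch
  · have h1 : Tendsto (fun i => vi (i + N)) atTop (𝓝 (v, w)) :=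
      hvt.comp (tendsto_add_atTop_nat N)
    have h2 : Tendsto (fun i => (-(ContinuousLinearMap.adjoint (Φ' ((zi (i + N)).1)) lam),
        (0 : Euc m))) atTop (𝓝 (-(ContinuousLinearMap.adjoint (Φ' z.1) lam), 0)) :=
      (hadj.neg).prodMk_nhds tendsto_const_nhds
    have hpe : (p, w) = (v, w) + (-(ContinuousLinearMap.adjoint (Φ' z.1) lam), (0 : Euc m)) := by
      rw [show ContinuousLinearMap.adjoint (Φ' z.1) lam = v - p from hlam]
      ext <;> simp
    rw [hpe]
    exact h1.add h2

end Chart2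

/-- For a smooth manifold `X ⊆ dom S`, the projected normal
cone mapping is outer semicontinuous relative to `gph S|_X` at `(xb,ub)`, and
consequently the projectional coderivative is attained at the reference point:
`D*_X S(xb|ub) = proj_{T_X(xb)} D*S|_X(xb|ub)`. -/
theorem stmt13 {n m : ℕ} (S : Euc n → Set (Euc m)) (X : Set (Euc n))
    (xb : Euc n) (ub : Euc m) (hX : SmoothManifoldAround X xb)
    (hdom : X ⊆ {x | (S x).Nonempty})
    (hmem : (xb, ub) ∈ gph (restr S X))
    (hcl : LocallyClosedAt (gph S) (xb, ub)) :
    (∀ (zk qk : ℕ → Euc n × Euc m) (q : Euc n × Euc m),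
      (∀ k, zk k ∈ gph (restr S X)) → (∀ k, qk k ∈ projNormal S X (zk k)) →
      Tendsto zk atTop (𝓝 (xb, ub)) → Tendsto qk atTop (𝓝 q) →
      q ∈ projNormal S X (xb, ub)) ∧
    (∀ us : Euc m, projCoderiv S X xb ub us =
      {t : Euc n | ∃ v ∈ coderiv (restr S X) xb ub us, t ∈ projSet (tanCone X xb) v}) := by
  obtain ⟨c, O, Φ, Φ', hO, hxbO, hXO, hd, hcd, hsurjb⟩ := hX
  set D := gph (restr S X) with hDdef
  set B : Euc n → (Euc c →L[ℝ] Euc c) :=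
    fun x => (Φ' x) ∘L ContinuousLinearMap.adjoint (Φ' x) with hBdef
  have hBcont : ContinuousOn B O := by
    have h1 : ContinuousOn (fun x => (Φ' x, ContinuousLinearMap.adjoint (Φ' x))) O := by
      refine hcd.prodMk ?_
      exact ((ContinuousLinearMap.adjoint (𝕜 := ℝ) (E := Euc n)
        (F := Euc c)).continuous).comp_continuousOn hcd
    exact isBoundedBilinearMap_comp.continuous.comp_continuousOn h1
  set U : Set (Euc n) := O ∩ B ⁻¹' {u | IsUnit u} with hUdef
  have hUopen : IsOpen U := hBcont.isOpen_inter_preimage hO Units.isOpen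
  have hxbU : xb ∈ U := ⟨hxbO, isUnit_comp_adjoint_of_surj _ hsurjb⟩
  have htan : ∀ x, x ∈ X → x ∈ U → tanCone X x = (LinearMap.ker (Φ' x : Euc n →ₗ[ℝ] Euc c) : Set (Euc n)) := by
    intro x hxX hxU
    refine Subset.antisymm (tanCone_subset_ker_s13 hO hXO hd ⟨hxX, hxU.1⟩) ?_
    exact ker_subset_tanCone_s13 hO hXO hd hcd ⟨hxX, hxU.1⟩
      (surj_of_isUnit_comp_adjoint _ hxU.2)
  have hstep : ∀ z, z ∈ D → z.1 ∈ U → ∀ q, q ∈ projNormal S X z →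
      q ∈ lNormal2 D z ∧ Φ' z.1 q.1 = 0 := by
    rintro z hzD hzU q ⟨v, hvN, hproj⟩
    have hxX : z.1 ∈ X := hzD.2
    rw [htan _ hxX hzU] at hproj
    have horth : v - q.1 ∈ (LinearMap.ker (Φ' z.1 : Euc n →ₗ[ℝ] Euc c))ᗮ :=
      projSet_sub_mem_orthogonal _ hproj
    have hrange := orthogonal_ker_le_range_adjoint (Φ' z.1) horth
    have hq1 : (q.1, q.2) ∈ lNormal2 D z :=
      proj_mem_lNormal2 hO hXO hd hcd hzD hzU.1 hvN hrange
    exact ⟨by simpa using hq1, LinearMap.mem_ker.mp hproj.1⟩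
  have hosc : ∀ (zk qk : ℕ → Euc n × Euc m) (q : Euc n × Euc m),
      (∀ k, zk k ∈ gph (restr S X)) → (∀ k, qk k ∈ projNormal S X (zk k)) →
      Tendsto zk atTop (𝓝 (xb, ub)) → Tendsto qk atTop (𝓝 q) →
      q ∈ projNormal S X (xb, ub) := by
    intro zk qk q h1 h2 h3 h4
    have hxk : Tendsto (fun k => (zk k).1) atTop (𝓝 xb) :=
      (continuous_fst.tendsto _).comp h3
    obtain ⟨K0, hK0⟩ := eventually_atTop.mp (hxk.eventually (hUopen.eventually_mem hxbU))
    have hstepk : ∀ k, qk (k + K0) ∈ lNormal2 D (zk (k + K0)) ∧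
        Φ' ((zk (k + K0)).1) ((qk (k + K0)).1) = 0 :=
      fun k => hstep _ (h1 _) (hK0 _ (Nat.le_add_left _ _)) _ (h2 _)
    have hqN : q ∈ lNormal2 D (xb, ub) :=
      lNormal2_osc hmem (fun k => (hstepk k).1)
        (h3.comp (tendsto_add_atTop_nat K0)) (h4.comp (tendsto_add_atTop_nat K0))
    have hker : Φ' xb q.1 = 0 := by
      have hA : Tendsto (fun k => Φ' ((zk (k + K0)).1)) atTop (𝓝 (Φ' xb)) :=
        ((hcd.continuousAt (hO.mem_nhds hxbO)).tendsto).comp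
          (hxk.comp (tendsto_add_atTop_nat K0))
      have hv : Tendsto (fun k => (qk (k + K0)).1) atTop (𝓝 q.1) :=
        ((continuous_fst.tendsto _).comp h4).comp (tendsto_add_atTop_nat K0)
      have ht : Tendsto (fun k => Φ' ((zk (k + K0)).1) ((qk (k + K0)).1)) atTop
          (𝓝 (Φ' xb q.1)) :=
        (isBoundedBilinearMap_apply.continuous.tendsto (Φ' xb, q.1)).comp
          (hA.prodMk_nhds hv)
      exact tendsto_nhds_unique ((tendsto_congr (fun k => (hstepk k).2)).mp ht)
        tendsto_const_nhds
    have hq1tan : q.1 ∈ tanCone X xb := by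
      rw [htan xb hmem.2 hxbU]
      exact LinearMap.mem_ker.mpr hker
    refine ⟨q.1, by simpa using hqN, hq1tan, ?_⟩
    rw [sub_self, norm_zero]
    exact (Metric.infDist_zero_of_mem hq1tan).symm
  refine ⟨hosc, fun us => ?_⟩
  ext t
  simp only [Set.mem_setOf_eq]
  constructor
  · rintro ⟨zk, qk, hzk, hqk, hzt, hqt⟩
    obtain ⟨v, hvN, hproj⟩ := hosc zk qk (t, -us) hzk hqk hzt hqt
    exact ⟨v, hvN, hproj⟩
  · rintro ⟨v, hvc, htp⟩
    exact ⟨fun _ => (xb, ub), fun _ => (t, -us), fun _ => hmem,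
      fun _ => ⟨v, hvc, htp⟩, tendsto_const_nhds, tendsto_const_nhds⟩
end
end

section
/- Let X ⊆ ℝⁿ be closed and F : ℝⁿ → ℝᵐ be strictly continuous (locally Lipschitz) at x̄ relative to X. Then for every z ∈ ℝᵐ, the Fréchet coderivative of the restriction equals the Fréchet subdifferential of the scalarization: D̂*F|_X(x̄)(z) = ∂̂(zF|_X)(x̄), and the limiting coderivative equals the limiting subdifferential: D*F|_X(x̄)(z) = ∂(zF|_X)(x̄). -/
open Filter Topology Set Metric
open scoped ENNReal NNReal

noncomputable section

variable {E F : Type*}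

/-- Fréchet subdifferential of the scalarization `x ↦ f(x) + δ_X(x)` at `xb`. -/
def fSubdiffOn {E : Type*} [NormedAddCommGroup E] [InnerProductSpace ℝ E]
    (f : E → ℝ) (X : Set E) (xb : E) : Set E :=
  {v | xb ∈ X ∧ ∀ ε > 0, ∃ δ > 0, ∀ x ∈ X, ‖x - xb‖ < δ →
      f xb + (inner ℝ v (x - xb) : ℝ) - ε * ‖x - xb‖ ≤ f x}

/-- Limiting subdifferential of the scalarization `x ↦ f(x) + δ_X(x)` at `xb`. -/
def lSubdiffOn {E : Type*} [NormedAddCommGroup E] [InnerProductSpace ℝ E]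
    (f : E → ℝ) (X : Set E) (xb : E) : Set E :=
  {v | xb ∈ X ∧ ∃ xk vk : ℕ → E,
      (∀ k, vk k ∈ fSubdiffOn f X (xk k)) ∧ Tendsto xk atTop (𝓝 xb) ∧
      Tendsto (fun k => f (xk k)) atTop (𝓝 (f xb)) ∧ Tendsto vk atTop (𝓝 v)}

/-- `f` is strictly continuous (locally Lipschitz) at `xb` relative to `X`. -/
def StrictlyContinuousRelAt {E F : Type*} [NormedAddCommGroup E] [NormedAddCommGroup F]
    (f : E → F) (X : Set E) (xb : E) : Prop :=
  ∃ K : ℝ, ∃ δ > 0, ∀ x ∈ X, ∀ x' ∈ X, ‖x - xb‖ < δ → ‖x' - xb‖ < δ →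
    ‖f x - f x'‖ ≤ K * ‖x - x'‖

section MyAux

variable {n m : ℕ}

lemma my_mem_gphR {f : Euc n → Euc m} {X : Set (Euc n)} {p : Euc n × Euc m} :
    p ∈ gph (restr (fun x => {f x}) X) ↔ p.2 = f p.1 ∧ p.1 ∈ X := by
  simp [gph, restr]

lemma my_sub_to_norm {f : Euc n → Euc m} {X : Set (Euc n)} {x₀ : Euc n} {w : Euc m} {v : Euc n}
    (h : v ∈ fSubdiffOn (fun x => (inner ℝ w (f x) : ℝ)) X x₀) :
    (v, -w) ∈ fNormal2 (gph (restr (fun x => {f x}) X)) (x₀, f x₀) := by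
  obtain ⟨hx₀, h⟩ := h
  refine ⟨my_mem_gphR.2 ⟨rfl, hx₀⟩, fun ε hε => ?_⟩
  obtain ⟨δ, hδ, hδ'⟩ := h ε hε
  refine ⟨δ, hδ, fun p hp hpd => ?_⟩
  obtain ⟨hp2, hp1⟩ := my_mem_gphR.1 hp
  have h1 : ‖p.1 - x₀‖ ≤ ‖p - (x₀, f x₀)‖ := by
    simpa using norm_fst_le (p - (x₀, f x₀))
  have h2 := hδ' p.1 hp1 (lt_of_le_of_lt h1 hpd)
  simp only at h2
  have h3 : (inner ℝ (-w) (p.2 - f x₀) : ℝ)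
      = -((inner ℝ w (f p.1) : ℝ) - (inner ℝ w (f x₀) : ℝ)) := by
    rw [hp2, inner_neg_left, inner_sub_right]
  have h4 : ε * ‖p.1 - x₀‖ ≤ ε * ‖p - (x₀, f x₀)‖ :=
    mul_le_mul_of_nonneg_left h1 hε.le
  show (inner ℝ v (p.1 - x₀) : ℝ) + (inner ℝ (-w) (p.2 - f x₀) : ℝ) ≤ ε * ‖p - (x₀, f x₀)‖
  rw [h3]
  linarith

lemma my_norm_to_sub {f : Euc n → Euc m} {X : Set (Euc n)} {x₀ : Euc n} {a : Euc n} {b w : Euc m}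
    {K ρ : ℝ} (hK : 1 ≤ K) (hρ : 0 < ρ)
    (hLip : ∀ x ∈ X, ∀ x' ∈ X, ‖x - x₀‖ < ρ → ‖x' - x₀‖ < ρ → ‖f x - f x'‖ ≤ K * ‖x - x'‖)
    (hx₀ : x₀ ∈ X)
    (h : (a, b) ∈ fNormal2 (gph (restr (fun x => {f x}) X)) (x₀, f x₀)) :
    ∀ ε > 0, ∃ δ > 0, ∀ x ∈ X, ‖x - x₀‖ < δ →
      (inner ℝ w (f x₀) : ℝ) + (inner ℝ a (x - x₀) : ℝ) - (K * ‖b + w‖ + ε) * ‖x - x₀‖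
        ≤ (inner ℝ w (f x) : ℝ) := by
  intro ε hε
  have hK0 : (0:ℝ) < K := lt_of_lt_of_le one_pos hK
  obtain ⟨δ₀, hδ₀, H⟩ := h.2 (ε / K) (div_pos hε hK0)
  refine ⟨min (δ₀ / K) ρ, lt_min (div_pos hδ₀ hK0) hρ, fun x hx hxd => ?_⟩
  have hxρ : ‖x - x₀‖ < ρ := lt_of_lt_of_le hxd (min_le_right _ _)
  have hLx : ‖f x - f x₀‖ ≤ K * ‖x - x₀‖ := hLip x hx x₀ hx₀ hxρ (by simpa using hρ)
  have hpn : ‖((x, f x) : Euc n × Euc m) - (x₀, f x₀)‖ ≤ K * ‖x - x₀‖ := by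
    rw [Prod.norm_def]
    exact max_le (le_mul_of_one_le_left (norm_nonneg _) hK) hLx
  have hpd : ‖((x, f x) : Euc n × Euc m) - (x₀, f x₀)‖ < δ₀ := by
    calc ‖((x, f x) : Euc n × Euc m) - (x₀, f x₀)‖ ≤ K * ‖x - x₀‖ := hpn
    _ < K * (δ₀ / K) :=
        mul_lt_mul_of_pos_left (lt_of_lt_of_le hxd (min_le_left _ _)) hK0
    _ = δ₀ := by rw [mul_comm]; exact div_mul_cancel₀ _ (ne_of_gt hK0)
  have hmem : ((x, f x) : Euc n × Euc m) ∈ gph (restr (fun x => {f x}) X) :=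
    my_mem_gphR.2 ⟨rfl, hx⟩
  have h1' := H _ hmem hpd
  have h1 : (inner ℝ a (x - x₀) : ℝ) + (inner ℝ b (f x - f x₀) : ℝ)
      ≤ (ε / K) * ‖((x, f x) : Euc n × Euc m) - (x₀, f x₀)‖ := h1'
  have h2 : (ε / K) * ‖((x, f x) : Euc n × Euc m) - (x₀, f x₀)‖ ≤ ε * ‖x - x₀‖ := by
    calc (ε / K) * ‖((x, f x) : Euc n × Euc m) - (x₀, f x₀)‖
        ≤ (ε / K) * (K * ‖x - x₀‖) :=
          mul_le_mul_of_nonneg_left hpn (le_of_lt (div_pos hε hK0))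
    _ = ε * ‖x - x₀‖ := by field_simp
  have h3 : (inner ℝ (-(b + w)) (f x - f x₀) : ℝ) ≤ (K * ‖b + w‖) * ‖x - x₀‖ := by
    calc (inner ℝ (-(b + w)) (f x - f x₀) : ℝ) ≤ ‖-(b + w)‖ * ‖f x - f x₀‖ :=
          real_inner_le_norm _ _
    _ = ‖b + w‖ * ‖f x - f x₀‖ := by rw [norm_neg]
    _ ≤ ‖b + w‖ * (K * ‖x - x₀‖) := mul_le_mul_of_nonneg_left hLx (norm_nonneg _)
    _ = (K * ‖b + w‖) * ‖x - x₀‖ := by ring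
  have h4 : (inner ℝ (-(b + w)) (f x - f x₀) : ℝ)
      = -(inner ℝ b (f x - f x₀) : ℝ) - ((inner ℝ w (f x) : ℝ) - (inner ℝ w (f x₀) : ℝ)) := by
    simp only [inner_neg_left, inner_add_left, inner_sub_right]; ring
  linarith [h1, h2, h3, h4.symm.le, h4.le]

lemma my_contOn {S : Set (Euc n)} {f : Euc n → Euc m} {w : Euc m} {K : ℝ} (hK : 0 ≤ K)
    (hLip : ∀ x ∈ S, ∀ x' ∈ S, ‖f x - f x'‖ ≤ K * ‖x - x'‖) :
    ContinuousOn (fun x => (inner ℝ w (f x) : ℝ)) S := by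
  rw [Metric.continuousOn_iff]
  intro x hx ε hε
  have hwK : (0:ℝ) < ‖w‖ * K + 1 := by nlinarith [norm_nonneg w]
  refine ⟨ε / (‖w‖ * K + 1), by positivity, fun y hy hd => ?_⟩
  have h1 : |(inner ℝ w (f y) : ℝ) - (inner ℝ w (f x) : ℝ)| ≤ ‖w‖ * K * ‖y - x‖ := by
    rw [← inner_sub_right]
    calc |(inner ℝ w (f y - f x) : ℝ)| ≤ ‖w‖ * ‖f y - f x‖ := abs_real_inner_le_norm _ _
    _ ≤ ‖w‖ * (K * ‖y - x‖) :=
        mul_le_mul_of_nonneg_left (hLip y hy x hx) (norm_nonneg _)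
    _ = ‖w‖ * K * ‖y - x‖ := by ring
  rw [Real.dist_eq]
  rw [dist_eq_norm] at hd
  calc |(inner ℝ w (f y) : ℝ) - (inner ℝ w (f x) : ℝ)| ≤ ‖w‖ * K * ‖y - x‖ := h1
  _ ≤ (‖w‖ * K + 1) * ‖y - x‖ := by nlinarith [norm_nonneg (y - x)]
  _ < (‖w‖ * K + 1) * (ε / (‖w‖ * K + 1)) := by
      exact mul_lt_mul_of_pos_left hd hwK
  _ = ε := by field_simp

lemma my_penalize {X : Set (Euc n)} (hX : IsClosed X) {x₀ : Euc n} (hx₀ : x₀ ∈ X)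
    {g : Euc n → ℝ} {a : Euc n} {E ρ : ℝ} (hE : 0 ≤ E) (hρ : 0 < ρ)
    (hg : ContinuousOn g (X ∩ Metric.closedBall x₀ ρ))
    (hsub : ∀ ε > 0, ∃ δ > 0, ∀ x ∈ X, ‖x - x₀‖ < δ →
      g x₀ + (inner ℝ a (x - x₀) : ℝ) - (E + ε) * ‖x - x₀‖ ≤ g x)
    {η : ℝ} (hη : 0 < η) :
    ∃ xh, xh ∈ X ∧ ∃ a', a' ∈ fSubdiffOn g X xh ∧ ‖xh - x₀‖ ≤ η ∧ ‖a' - a‖ ≤ 2 * E + η := by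
  obtain ⟨δ₀, hδ₀, H⟩ := hsub (η / 2) (by positivity)
  set E' := E + η / 2 with hE'def
  clear_value E'
  have hE' : 0 < E' := by rw [hE'def]; linarith
  set ρ' := min ρ δ₀ / 2 with hρ'def
  clear_value ρ'
  have hmin0 : 0 < min ρ δ₀ := lt_min hρ hδ₀
  have hρ'p : 0 < ρ' := by rw [hρ'def]; linarith
  have hρ'ρ : ρ' ≤ ρ := by
    have := min_le_left ρ δ₀; rw [hρ'def]; linarith
  have hρ'δ : ρ' < δ₀ := by
    have := min_le_right ρ δ₀; rw [hρ'def]; linarith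
  set lam := min ρ' η / (2 * E' + 1) with hlam
  clear_value lam
  have hden : (0:ℝ) < 2 * E' + 1 := by linarith
  have hlamp : 0 < lam := by rw [hlam]; exact div_pos (lt_min hρ'p hη) hden
  have h2lE : 2 * lam * E' < min ρ' η := by
    have hm : 0 < min ρ' η := lt_min hρ'p hη
    have he : 2 * lam * E' = min ρ' η * (2 * E') / (2 * E' + 1) := by
      rw [hlam]; ring
    rw [he, div_lt_iff₀ (by linarith)]
    nlinarith
  have hCcpt : IsCompact (X ∩ Metric.closedBall x₀ ρ') :=
    (isCompact_closedBall x₀ ρ').inter_left hX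
  have hCne : (X ∩ Metric.closedBall x₀ ρ').Nonempty :=
    ⟨x₀, hx₀, Metric.mem_closedBall_self hρ'p.le⟩
  set ψ := fun x : Euc n => g x - (inner ℝ a (x - x₀) : ℝ) + ‖x - x₀‖ ^ 2 / (2 * lam) with hψ
  have hψc : ContinuousOn ψ (X ∩ Metric.closedBall x₀ ρ') := by
    refine ContinuousOn.add (ContinuousOn.sub ?_ ?_) ?_
    · exact hg.mono (inter_subset_inter_right _ (Metric.closedBall_subset_closedBall hρ'ρ))
    · exact (Continuous.inner continuous_const (continuous_id.sub continuous_const)).continuousOn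
    · exact (((continuous_id.sub continuous_const).norm.pow 2).div_const _).continuousOn
  obtain ⟨xh, hxhC, hmin⟩ := hCcpt.exists_isMinOn hCne hψc
  have hminle : ∀ x ∈ X ∩ Metric.closedBall x₀ ρ',
      g xh - (inner ℝ a (xh - x₀) : ℝ) + ‖xh - x₀‖ ^ 2 / (2 * lam)
        ≤ g x - (inner ℝ a (x - x₀) : ℝ) + ‖x - x₀‖ ^ 2 / (2 * lam) := by
    intro x hx
    have h := hmin hx
    rw [hψ] at h
    exact h
  obtain ⟨hxhX, hxhB⟩ := hxhC
  have hxhn : ‖xh - x₀‖ ≤ ρ' := by rwa [Metric.mem_closedBall, dist_eq_norm] at hxhB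
  have h1 : g xh - (inner ℝ a (xh - x₀) : ℝ) + ‖xh - x₀‖ ^ 2 / (2 * lam) ≤ g x₀ := by
    have h := hminle x₀ ⟨hx₀, Metric.mem_closedBall_self hρ'p.le⟩
    have h0 : ‖x₀ - x₀‖ = (0:ℝ) := by simp
    have h0' : (inner ℝ a (x₀ - x₀) : ℝ) = 0 := by simp
    rw [h0, h0'] at h
    calc g xh - (inner ℝ a (xh - x₀) : ℝ) + ‖xh - x₀‖ ^ 2 / (2 * lam)
        ≤ g x₀ - 0 + 0 ^ 2 / (2 * lam) := h
    _ = g x₀ := by ring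
  have h2 : g x₀ + (inner ℝ a (xh - x₀) : ℝ) - E' * ‖xh - x₀‖ ≤ g xh :=
    H xh hxhX (lt_of_le_of_lt hxhn hρ'δ)
  have hq : ‖xh - x₀‖ ^ 2 / (2 * lam) ≤ E' * ‖xh - x₀‖ := by linarith
  have hr : ‖xh - x₀‖ ≤ 2 * lam * E' := by
    have hq' : ‖xh - x₀‖ ^ 2 ≤ E' * ‖xh - x₀‖ * (2 * lam) := by
      rw [← div_le_iff₀ (by linarith : (0:ℝ) < 2 * lam)]
      exact hq
    by_contra hcon
    push_neg at hcon
    have h0 : 0 < 2 * lam * E' := by positivity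
    have hrpos : 0 < ‖xh - x₀‖ := h0.trans hcon
    nlinarith [mul_lt_mul_of_pos_right hcon hrpos]
  have hrρ : ‖xh - x₀‖ < ρ' :=
    lt_of_le_of_lt hr (lt_of_lt_of_le h2lE (min_le_left _ _))
  have hrη : ‖xh - x₀‖ ≤ η :=
    le_trans hr (le_of_lt (lt_of_lt_of_le h2lE (min_le_right _ _)))
  refine ⟨xh, hxhX, a - lam⁻¹ • (xh - x₀), ⟨hxhX, fun ε hε => ?_⟩, hrη, ?_⟩
  · refine ⟨min (2 * lam * ε) (ρ' - ‖xh - x₀‖),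
      lt_min (by positivity) (by linarith), fun x hxX hxd => ?_⟩
    have htri : ‖x - x₀‖ ≤ ‖x - xh‖ + ‖xh - x₀‖ := by
      simpa [dist_eq_norm] using dist_triangle x xh x₀
    have h5 : ‖x - xh‖ < ρ' - ‖xh - x₀‖ := lt_of_lt_of_le hxd (min_le_right _ _)
    have hxC : x ∈ X ∩ Metric.closedBall x₀ ρ' := by
      refine ⟨hxX, ?_⟩
      rw [Metric.mem_closedBall, dist_eq_norm]
      linarith
    have hψle := hminle x hxC
    have hdec : x - x₀ = (xh - x₀) + (x - xh) := by abel
    have hexp : ‖x - x₀‖ ^ 2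
        = ‖xh - x₀‖ ^ 2 + 2 * (inner ℝ (xh - x₀) (x - xh) : ℝ) + ‖x - xh‖ ^ 2 := by
      rw [hdec]; exact norm_add_sq_real _ _
    have hia : (inner ℝ a (x - x₀) : ℝ) = (inner ℝ a (xh - x₀) : ℝ) + (inner ℝ a (x - xh) : ℝ) := by
      rw [hdec, inner_add_right]
    have hia' : (inner ℝ (a - lam⁻¹ • (xh - x₀)) (x - xh) : ℝ)
        = (inner ℝ a (x - xh) : ℝ) - lam⁻¹ * (inner ℝ (xh - x₀) (x - xh) : ℝ) := by
      rw [inner_sub_left, real_inner_smul_left]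
    have hsq : ‖x - xh‖ ^ 2 / (2 * lam) ≤ ε * ‖x - xh‖ := by
      have h6 : ‖x - xh‖ ≤ 2 * lam * ε := le_of_lt (lt_of_lt_of_le hxd (min_le_left _ _))
      rw [div_le_iff₀ (by linarith : (0:ℝ) < 2 * lam)]
      nlinarith [norm_nonneg (x - xh)]
    have hdiv : ‖x - x₀‖ ^ 2 / (2 * lam)
        = ‖xh - x₀‖ ^ 2 / (2 * lam) + lam⁻¹ * (inner ℝ (xh - x₀) (x - xh) : ℝ)
          + ‖x - xh‖ ^ 2 / (2 * lam) := by
      rw [hexp]; field_simp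
    show g xh + (inner ℝ (a - lam⁻¹ • (xh - x₀)) (x - xh) : ℝ) - ε * ‖x - xh‖ ≤ g x
    rw [hia']
    linarith
  · have he : a - lam⁻¹ • (xh - x₀) - a = -(lam⁻¹ • (xh - x₀)) := by abel
    rw [he, norm_neg, norm_smul]
    have h7 : ‖(lam⁻¹ : ℝ)‖ = lam⁻¹ := by
      rw [Real.norm_eq_abs, abs_of_pos (inv_pos.mpr hlamp)]
    rw [h7]
    have h8 : lam⁻¹ * ‖xh - x₀‖ ≤ lam⁻¹ * (2 * lam * E') :=
      mul_le_mul_of_nonneg_left hr (inv_nonneg.mpr hlamp.le)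
    have h9 : lam⁻¹ * (2 * lam * E') = 2 * E' := by field_simp
    have h10 : 2 * E' = 2 * E + η := by rw [hE'def]; ring
    linarith

end MyAux

/-- Scalarization of coderivatives of a restricted strictly
continuous single-valued map: `D̂*F|_X(xb)(z) = ∂̂(zF|_X)(xb)` and
`D*F|_X(xb)(z) = ∂(zF|_X)(xb)`. -/
theorem stmt14 {n m : ℕ} (X : Set (Euc n)) (hX : IsClosed X)
    (f : Euc n → Euc m) (xb : Euc n) (hxb : xb ∈ X)
    (hf : StrictlyContinuousRelAt f X xb) :
    ∀ z : Euc m,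
      fCoderiv (restr (fun x => {f x}) X) xb (f xb) z =
        fSubdiffOn (fun x => (inner ℝ z (f x) : ℝ)) X xb ∧
      coderiv (restr (fun x => {f x}) X) xb (f xb) z =
        lSubdiffOn (fun x => (inner ℝ z (f x) : ℝ)) X xb := by
  obtain ⟨K₀, δL, hδL, hLip₀⟩ := hf
  obtain ⟨K, hKdef⟩ : ∃ K : ℝ, K = max K₀ 1 := ⟨_, rfl⟩
  have hK1 : (1:ℝ) ≤ K := by rw [hKdef]; exact le_max_right _ _
  have hK0 : (0:ℝ) < K := lt_of_lt_of_le one_pos hK1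
  have hLip : ∀ x ∈ X, ∀ x' ∈ X, ‖x - xb‖ < δL → ‖x' - xb‖ < δL →
      ‖f x - f x'‖ ≤ K * ‖x - x'‖ := by
    intro x hx x' hx' h1 h2
    refine le_trans (hLip₀ x hx x' hx' h1 h2)
      (mul_le_mul_of_nonneg_right ?_ (norm_nonneg _))
    rw [hKdef]; exact le_max_left _ _
  intro z
  constructor
  · ext x'
    constructor
    · intro hx'
      have hx'' : ((x', -z) : Euc n × Euc m) ∈
          fNormal2 (gph (restr (fun x => {f x}) X)) (xb, f xb) := hx'
      have H := my_norm_to_sub (w := z) hK1 hδL hLip hxb hx''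
      refine ⟨hxb, fun ε hε => ?_⟩
      obtain ⟨δ, hδ, H'⟩ := H ε hε
      refine ⟨δ, hδ, fun x hx hxd => ?_⟩
      have h := H' x hx hxd
      have hz : K * ‖-z + z‖ + ε = ε := by simp
      rw [hz] at h
      exact h
    · intro hx'
      exact my_sub_to_norm hx'
  · ext v
    constructor
    · intro hv
      obtain ⟨hG, zk, vk, hfn, hzk, hvk⟩ := hv
      have hzmem : ∀ k, (zk k).2 = f ((zk k).1) ∧ (zk k).1 ∈ X :=
        fun k => my_mem_gphR.1 (hfn k).1
      have hfst : Tendsto (fun k => (zk k).1) atTop (𝓝 xb) :=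
        (continuous_fst.tendsto _).comp hzk
      have ha : Tendsto (fun k => (vk k).1) atTop (𝓝 v) :=
        (continuous_fst.tendsto _).comp hvk
      have hb : Tendsto (fun k => (vk k).2) atTop (𝓝 (-z)) :=
        (continuous_snd.tendsto _).comp hvk
      obtain ⟨N, hN⟩ := Metric.tendsto_atTop.mp hfst (δL / 2) (by linarith)
      have key : ∀ k : ℕ, ∃ xh, xh ∈ X ∧ ∃ ah,
          ah ∈ fSubdiffOn (fun x => (inner ℝ z (f x) : ℝ)) X xh ∧
          ‖xh - (zk (k + N)).1‖ ≤ 1/((k:ℝ)+1) ∧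
          ‖ah - (vk (k + N)).1‖ ≤ 2 * (K * ‖(vk (k + N)).2 + z‖) + 1/((k:ℝ)+1) := by
        intro k
        have hj : ‖(zk (k + N)).1 - xb‖ < δL / 2 := by
          have := hN (k + N) (Nat.le_add_left N k)
          rwa [dist_eq_norm] at this
        have hball : ∀ x, ‖x - (zk (k + N)).1‖ ≤ δL / 4 → ‖x - xb‖ < δL := by
          intro x h1
          have htri : ‖x - xb‖ ≤ ‖x - (zk (k + N)).1‖ + ‖(zk (k + N)).1 - xb‖ := by
            simpa [dist_eq_norm] using dist_triangle x ((zk (k + N)).1) xb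
          linarith
        have hLipj : ∀ x ∈ X, ∀ x' ∈ X, ‖x - (zk (k + N)).1‖ < δL / 4 →
            ‖x' - (zk (k + N)).1‖ < δL / 4 → ‖f x - f x'‖ ≤ K * ‖x - x'‖ := by
          intro x hx x' hx' h1 h2
          exact hLip x hx x' hx' (hball x h1.le) (hball x' h2.le)
        have hfn' : ((vk (k + N)).1, (vk (k + N)).2) ∈
            fNormal2 (gph (restr (fun x => {f x}) X)) ((zk (k + N)).1, f ((zk (k + N)).1)) := by
          have e : ((zk (k + N)).1, f ((zk (k + N)).1)) = zk (k + N) := by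
            rw [← (hzmem (k + N)).1]
          rw [e]
          exact hfn (k + N)
        have hsubj := my_norm_to_sub (w := z) hK1 (by linarith : (0:ℝ) < δL/4)
          hLipj (hzmem (k + N)).2 hfn'
        have hcont : ContinuousOn (fun x => (inner ℝ z (f x) : ℝ))
            (X ∩ Metric.closedBall ((zk (k + N)).1) (δL / 4)) := by
          refine my_contOn hK0.le ?_
          intro x hx x' hx'
          have hx1 : ‖x - (zk (k+N)).1‖ ≤ δL/4 := by
            have := hx.2; rwa [Metric.mem_closedBall, dist_eq_norm] at this
          have hx2 : ‖x' - (zk (k+N)).1‖ ≤ δL/4 := by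
            have := hx'.2; rwa [Metric.mem_closedBall, dist_eq_norm] at this
          exact hLip x hx.1 x' hx'.1 (hball x hx1) (hball x' hx2)
        exact my_penalize hX (hzmem (k + N)).2
          (mul_nonneg hK0.le (norm_nonneg _)) (by linarith : (0:ℝ) < δL/4)
          hcont hsubj (by positivity : (0:ℝ) < 1/((k:ℝ)+1))
      choose xh hxhX ah hah hcl hnm using key
      have hshift : Tendsto (fun k => (zk (k + N)).1) atTop (𝓝 xb) :=
        hfst.comp (tendsto_add_atTop_nat N)
      have hzn : Tendsto (fun k => ‖(zk (k + N)).1 - xb‖) atTop (𝓝 0) :=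
        tendsto_iff_norm_sub_tendsto_zero.mp hshift
      have hone : Tendsto (fun k : ℕ => 1/((k:ℝ)+1)) atTop (𝓝 0) :=
        tendsto_one_div_add_atTop_nhds_zero_nat
      have hxh : Tendsto xh atTop (𝓝 xb) := by
        rw [tendsto_iff_norm_sub_tendsto_zero]
        have hlim : Tendsto (fun k : ℕ => 1/((k:ℝ)+1) + ‖(zk (k + N)).1 - xb‖) atTop (𝓝 0) := by
          simpa using hone.add hzn
        refine squeeze_zero (fun k => norm_nonneg _) (fun k => ?_) hlim
        have htri : ‖xh k - xb‖ ≤ ‖xh k - (zk (k + N)).1‖ + ‖(zk (k + N)).1 - xb‖ := by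
          simpa [dist_eq_norm] using dist_triangle (xh k) ((zk (k + N)).1) xb
        linarith [hcl k]
      have hahv : Tendsto ah atTop (𝓝 v) := by
        rw [tendsto_iff_norm_sub_tendsto_zero]
        have hbn : Tendsto (fun k => ‖(vk (k + N)).2 + z‖) atTop (𝓝 0) := by
          have hbs : Tendsto (fun k => (vk (k + N)).2) atTop (𝓝 (-z)) :=
            hb.comp (tendsto_add_atTop_nat N)
          have h := (hbs.add (tendsto_const_nhds (x := z))).norm
          simpa using h
        have han : Tendsto (fun k => ‖(vk (k + N)).1 - v‖) atTop (𝓝 0) :=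
          tendsto_iff_norm_sub_tendsto_zero.mp (ha.comp (tendsto_add_atTop_nat N))
        have t1 : Tendsto (fun k => 2 * (K * ‖(vk (k + N)).2 + z‖)) atTop (𝓝 0) := by
          have := hbn.const_mul (2 * K)
          simpa [mul_assoc] using this
        have hlim : Tendsto (fun k : ℕ => 2 * (K * ‖(vk (k + N)).2 + z‖) + 1/((k:ℝ)+1)
            + ‖(vk (k + N)).1 - v‖) atTop (𝓝 0) := by
          simpa using (t1.add hone).add han
        refine squeeze_zero (fun k => norm_nonneg _) (fun k => ?_) hlim
        have htri : ‖ah k - v‖ ≤ ‖ah k - (vk (k + N)).1‖ + ‖(vk (k + N)).1 - v‖ := by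
          simpa [dist_eq_norm] using dist_triangle (ah k) ((vk (k + N)).1) v
        linarith [hnm k]
      have hgxh : Tendsto (fun k => (inner ℝ z (f (xh k)) : ℝ)) atTop (𝓝 (inner ℝ z (f xb))) := by
        rw [tendsto_iff_norm_sub_tendsto_zero]
        obtain ⟨N', hN'⟩ := Metric.tendsto_atTop.mp hxh δL hδL
        have hlim : Tendsto (fun k => ‖z‖ * (K * ‖xh k - xb‖)) atTop (𝓝 0) := by
          have := ((tendsto_iff_norm_sub_tendsto_zero.mp hxh).const_mul K).const_mul ‖z‖
          simpa using this
        refine squeeze_zero' (Eventually.of_forall fun k => norm_nonneg _) ?_ hlim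
        rw [eventually_atTop]
        refine ⟨N', fun k hk => ?_⟩
        have h1 : ‖xh k - xb‖ < δL := by
          have := hN' k hk; rwa [dist_eq_norm] at this
        have h2 : ‖f (xh k) - f xb‖ ≤ K * ‖xh k - xb‖ :=
          hLip _ (hxhX k) _ hxb h1 (by simpa using hδL)
        calc ‖(inner ℝ z (f (xh k)) : ℝ) - (inner ℝ z (f xb) : ℝ)‖
            = |(inner ℝ z (f (xh k) - f xb) : ℝ)| := by
              rw [inner_sub_right, Real.norm_eq_abs]
        _ ≤ ‖z‖ * ‖f (xh k) - f xb‖ := abs_real_inner_le_norm _ _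
        _ ≤ ‖z‖ * (K * ‖xh k - xb‖) := mul_le_mul_of_nonneg_left h2 (norm_nonneg _)
      exact ⟨hxb, xh, ah, hah, hxh, hgxh, hahv⟩
    · intro hv
      obtain ⟨hxbX, xk, vk, hsubk, hxk, hgk, hvkv⟩ := hv
      refine ⟨my_mem_gphR.2 ⟨rfl, hxb⟩, fun k => ((xk k, f (xk k)) : Euc n × Euc m),
        fun k => ((vk k, -z) : Euc n × Euc m), fun k => my_sub_to_norm (hsubk k), ?_, ?_⟩
      · refine Tendsto.prodMk_nhds hxk ?_
        rw [tendsto_iff_norm_sub_tendsto_zero]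
        have hev : ∀ᶠ k in atTop, ‖f (xk k) - f xb‖ ≤ K * ‖xk k - xb‖ := by
          obtain ⟨N', hN'⟩ := Metric.tendsto_atTop.mp hxk δL hδL
          rw [eventually_atTop]
          refine ⟨N', fun k hk => ?_⟩
          have h1 : ‖xk k - xb‖ < δL := by
            have := hN' k hk; rwa [dist_eq_norm] at this
          exact hLip _ ((hsubk k).1) _ hxb h1 (by simpa using hδL)
        refine squeeze_zero' (Eventually.of_forall fun k => norm_nonneg _) hev ?_
        have := (tendsto_iff_norm_sub_tendsto_zero.mp hxk).const_mul K
        simpa using this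
      · exact Tendsto.prodMk_nhds hvkv tendsto_const_nhds
end
end
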